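/- arXiv:1503.06997 — 8 statements merged into one kernel-verified Lean document; each statement's English description precedes it below -/
import Mathlib

section
/- Let A be an m×n complex matrix and λ ∈ ℝ. Then for all i ∈ {1,…,n} and j ∈ {1,…,m}, det((λI_n + A*A)_{.i}(a*_{.j})) = c₁^{(ij)} λ^{n−1} + c₂^{(ij)} λ^{n−2} + … + c_n^{(ij)}, where c_s^{(ij)} = Σ_{β ∈ J_{s,n}{i}} |(((A*A)_{.i}(a*_{.j}))_β^β| for s = 1,…,n−1 and c_n^{(ij)} = det((A*A)_{.i}(a*_{.j})). -/
open Matrix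

/-- The principal minor of a square matrix `M` determined by the subset `β` of indices:
the determinant of the submatrix of `M` whose rows and columns are indexed by `β`. -/
noncomputable def Matrix.pminor {n : Type*} [DecidableEq n] [Fintype n]
    (M : Matrix n n ℂ) (β : Finset n) : ℂ :=
  (M.submatrix (fun i : {x // x ∈ β} => i.1) (fun i : {x // x ∈ β} => i.1)).det

lemma det_fintype_irrel {α : Type*} [DecidableEq α] (I1 I2 : Fintype α)
    (M : Matrix α α ℂ) : @Matrix.det α _ I1 ℂ _ M = @Matrix.det α _ I2 ℂ _ M := by
  rw [Subsingleton.elim I1 I2]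

lemma det_unit_rows_aux {n : ℕ} (M : Matrix (Fin n) (Fin n) ℂ) (S : Finset (Fin n)) :
    (Matrix.of (S.piecewise (fun k => Mᵀ k) (fun k => (Pi.single k 1 : Fin n → ℂ)))).det
      = M.pminor S := by
  set Y : Matrix (Fin n) (Fin n) ℂ :=
    Matrix.of (S.piecewise (fun k => Mᵀ k) (fun k => (Pi.single k 1 : Fin n → ℂ))) with hY
  have h : ∀ k, ¬ k ∈ S → ∀ l, l ∈ S → Y k l = 0 := by
    intro k hk l hl
    have : Y k l = (Pi.single k 1 : Fin n → ℂ) l := by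
      simp [hY, Finset.piecewise_eq_of_notMem _ _ _ hk]
    rw [this, Pi.single_apply, if_neg (by rintro rfl; exact hk hl)]
  rw [Matrix.twoBlockTriangular_det Y (· ∈ S) h]
  have h2 : (Y.toSquareBlockProp fun k => ¬ k ∈ S) = 1 := by
    ext ⟨k, hk⟩ ⟨l, hl⟩
    have hYkl : Y k l = (Pi.single k 1 : Fin n → ℂ) l := by
      simp [hY, Finset.piecewise_eq_of_notMem _ _ _ hk]
    show Y k l = _
    rw [hYkl, Pi.single_apply, Matrix.one_apply]
    simp [Subtype.ext_iff, eq_comm]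
  have h1 : (Y.toSquareBlockProp (· ∈ S)) =
      (M.submatrix (fun i : {x // x ∈ S} => i.1) (fun i : {x // x ∈ S} => i.1))ᵀ := by
    ext ⟨k, hk⟩ ⟨l, hl⟩
    show Y k l = M l k
    have : Y k l = Mᵀ k l := by
      simp [hY, Finset.piecewise_eq_of_mem _ _ _ hk]
    rw [this, Matrix.transpose_apply]
  rw [h1, h2, Matrix.det_one, mul_one]
  unfold Matrix.pminor
  rw [← Matrix.det_transpose
    (M.submatrix (fun i : {x // x ∈ S} => i.1) (fun i : {x // x ∈ S} => i.1))]
  exact det_fintype_irrel _ _ _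

/-- For an `m × n` complex matrix `A` and `λ ∈ ℝ`, for all `i, j`,
`det((λI_n + AᴴA)_{.i}(aᴴ_{.j})) = c₁ λ^{n-1} + ⋯ + c_n`, where
`c_s = Σ_{β ∈ J_{s,n}{i}} |((AᴴA)_{.i}(aᴴ_{.j}))_β^β|` (for `s = n` this sum is the single
principal minor over all indices, i.e. `det((AᴴA)_{.i}(aᴴ_{.j}))`). -/
theorem det_smul_one_add_conjTranspose_mul_updateColumn
    (m n : ℕ) (A : Matrix (Fin m) (Fin n) ℂ) (lam : ℝ) (i : Fin n) (j : Fin m) :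
    (((lam : ℂ) • (1 : Matrix (Fin n) (Fin n) ℂ) + Aᴴ * A).updateCol i
        (fun k => Aᴴ k j)).det =
      ∑ s ∈ Finset.Icc 1 n,
        (∑ β ∈ (Finset.powersetCard s (Finset.univ : Finset (Fin n))).filter
            (fun β => i ∈ β),
          ((Aᴴ * A).updateCol i (fun k => Aᴴ k j)).pminor β) * (lam : ℂ) ^ (n - s) := by
  classical
  set B : Matrix (Fin n) (Fin n) ℂ := Aᴴ * A
  set c : Fin n → ℂ := fun k => Aᴴ k j
  set M : Matrix (Fin n) (Fin n) ℂ := B.updateCol i c with hM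
  set N : Matrix (Fin n) (Fin n) ℂ := (((lam : ℂ) • 1 + B).updateCol i c)
  set a : Fin n → Fin n → ℂ := fun k => Mᵀ k with ha
  set b : Fin n → Fin n → ℂ :=
    Function.update (fun k => (lam : ℂ) • (Pi.single k 1 : Fin n → ℂ)) i 0 with hb
  have hN : Nᵀ = Matrix.of (a + b) := by
    ext k l
    by_cases hk : k = i
    · subst hk
      simp [N, a, b, M, Matrix.transpose_apply, Matrix.updateCol_apply]
    · simp only [Matrix.of_apply, Pi.add_apply, a, b, Function.update_of_ne hk,
        Matrix.transpose_apply, N, M, Matrix.updateCol_apply, if_neg hk]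
      simp [Matrix.add_apply, Matrix.smul_apply, Matrix.one_apply, Pi.single_apply,
        add_comm, eq_comm]
  have key : N.det = ∑ S ∈ Finset.univ.filter (fun S : Finset (Fin n) => i ∈ S),
      M.pminor S * (lam : ℂ) ^ (n - S.card) := by
    rw [← Matrix.det_transpose, hN]
    have hdet : (Matrix.of (a + b)).det
        = (Matrix.detRowAlternating : (Fin n → ℂ) [⋀^Fin n]→ₗ[ℂ] ℂ) (a + b) := rfl
    rw [hdet, ← AlternatingMap.coe_multilinearMap, MultilinearMap.map_add_univ]
    rw [← Finset.sum_filter_add_sum_filter_not Finset.univ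
      (fun S : Finset (Fin n) => i ∈ S)]
    have hzero : ∀ S ∈ Finset.univ.filter (fun S : Finset (Fin n) => ¬ i ∈ S),
        (Matrix.detRowAlternating :
          (Fin n → ℂ) [⋀^Fin n]→ₗ[ℂ] ℂ).toMultilinearMap (S.piecewise a b) = 0 := by
      intro S hS
      rw [Finset.mem_filter] at hS
      exact MultilinearMap.map_coord_zero _ i
        (by rw [Finset.piecewise_eq_of_notMem _ _ _ hS.2]; simp [b])
    rw [Finset.sum_eq_zero hzero, add_zero]
    refine Finset.sum_congr rfl ?_
    intro S hS
    rw [Finset.mem_filter] at hS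
    have hiS : i ∈ S := hS.2
    set mS : Fin n → Fin n → ℂ :=
      S.piecewise a (fun k => (Pi.single k 1 : Fin n → ℂ)) with hmS
    have hpw : S.piecewise a b = Sᶜ.piecewise (fun k => (lam : ℂ) • mS k) mS := by
      funext k
      by_cases hk : k ∈ S
      · rw [Finset.piecewise_eq_of_mem _ _ _ hk,
          Finset.piecewise_eq_of_notMem _ _ _ (by simpa using hk),
          hmS, Finset.piecewise_eq_of_mem _ _ _ hk]
      · rw [Finset.piecewise_eq_of_notMem _ _ _ hk,
          Finset.piecewise_eq_of_mem _ _ _ (by simpa using hk),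
          hmS, Finset.piecewise_eq_of_notMem _ _ _ hk]
        have hki : k ≠ i := fun h => hk (h ▸ hiS)
        simp [hb, Function.update_of_ne hki]
    rw [hpw, MultilinearMap.map_piecewise_smul]
    have hm : (Matrix.detRowAlternating :
        (Fin n → ℂ) [⋀^Fin n]→ₗ[ℂ] ℂ).toMultilinearMap mS = M.pminor S := by
      rw [AlternatingMap.coe_multilinearMap]
      exact det_unit_rows_aux M S
    rw [hm, Finset.prod_const, Finset.card_compl, Fintype.card_fin, smul_eq_mul, mul_comm]
  rw [key]
  rw [← Finset.sum_fiberwise_of_maps_to (g := fun S : Finset (Fin n) => S.card)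
    (t := Finset.Icc 1 n) ?_ (fun S => M.pminor S * (lam : ℂ) ^ (n - S.card))]
  · refine Finset.sum_congr rfl ?_
    intro s hs
    have hset : (Finset.univ.filter (fun S : Finset (Fin n) => i ∈ S)).filter
        (fun S => S.card = s)
        = (Finset.powersetCard s (Finset.univ : Finset (Fin n))).filter (fun β => i ∈ β) := by
      ext β
      simp [Finset.mem_powersetCard_univ, and_comm]
    rw [hset, Finset.sum_mul]
    refine Finset.sum_congr rfl ?_
    intro β hβ
    rw [Finset.mem_filter, Finset.mem_powersetCard_univ] at hβ
    rw [hβ.1]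
  · intro S hS
    rw [Finset.mem_filter] at hS
    rw [Finset.mem_Icc]
    exact ⟨Finset.card_pos.2 ⟨i, hS.2⟩, le_trans (Finset.card_le_univ S) (by simp)⟩
end

section
/- Let A be an m×n complex matrix and λ ∈ ℝ. Then for all i ∈ {1,…,m} and j ∈ {1,…,n}, det((λI_m + AA*)_{j.}(a*_{i.})) = r₁^{(ij)} λ^{m−1} + r₂^{(ij)} λ^{m−2} + … + r_m^{(ij)}, where r_s^{(ij)} = Σ_{α ∈ I_{s,m}{j}} |(((AA*)_{j.}(a*_{i.}))_α^α| for s = 1,…,m−1 and r_m^{(ij)} = det((AA*)_{j.}(a*_{i.})). -/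
open Matrix

lemma det_piecewise_single {m : ℕ} (B : Matrix (Fin m) (Fin m) ℂ) (S : Finset (Fin m)) :
    (Matrix.of (S.piecewise (fun k => (Pi.single k 1 : Fin m → ℂ)) B)).det
      = B.pminor Sᶜ := by
  classical
  rw [← Matrix.det_submatrix_equiv_self (Equiv.sumCompl (· ∈ S)) _]
  have : (Matrix.of (S.piecewise (fun k => (Pi.single k 1 : Fin m → ℂ)) B)).submatrix
      (Equiv.sumCompl (· ∈ S)) (Equiv.sumCompl (· ∈ S)) =
      Matrix.fromBlocks 1 0
        (B.submatrix (fun x : {x // ¬ x ∈ S} => x.1) (fun x : {x // x ∈ S} => x.1))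
        (B.submatrix (fun x : {x // ¬ x ∈ S} => x.1) (fun x : {x // ¬ x ∈ S} => x.1)) := by
    ext a b
    cases a with
    | inl a => cases b with
      | inl b =>
        rw [Matrix.submatrix_apply, Equiv.sumCompl_apply_inl, Equiv.sumCompl_apply_inl,
          Matrix.fromBlocks_apply₁₁, Matrix.of_apply, show S.piecewise (fun k => (Pi.single k 1 : Fin m → ℂ)) B (a : Fin m)
            = Pi.single (a : Fin m) 1 from Finset.piecewise_eq_of_mem _ _ _ a.2]
        by_cases h : (a : Fin m) = b
        · simp [Matrix.one_apply, Pi.single_apply, Subtype.ext_iff, h]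
        · simp [Matrix.one_apply, Pi.single_apply, Subtype.ext_iff, h, Ne.symm h]
      | inr b =>
        have hne : (b : Fin m) ≠ (a : Fin m) := fun h => b.2 (h ▸ a.2)
        simp [Finset.piecewise, a.2, Pi.single_apply, hne]
    | inr a => cases b with
      | inl b => simp [Finset.piecewise, a.2]
      | inr b => simp [Finset.piecewise, a.2]
  rw [this, Matrix.det_fromBlocks_zero₁₂, Matrix.det_one, one_mul, Matrix.pminor,
    ← Matrix.det_submatrix_equiv_self
      (Equiv.subtypeEquivRight (fun x => (Finset.mem_compl (s := S)).symm))]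
  rfl

/-- For an `m × n` complex matrix `A` and `λ ∈ ℝ`, for all `i, j`,
`det((λI_m + AAᴴ)_{j.}(aᴴ_{i.})) = r₁ λ^{m-1} + ⋯ + r_m`, where
`r_s = Σ_{α ∈ I_{s,m}{j}} |((AAᴴ)_{j.}(aᴴ_{i.}))_α^α|` (for `s = m` this sum is the single
principal minor over all indices, i.e. `det((AAᴴ)_{j.}(aᴴ_{i.}))`). -/
theorem det_smul_one_add_self_mul_conjTranspose_updateRow
    (m n : ℕ) (A : Matrix (Fin m) (Fin n) ℂ) (lam : ℝ) (i : Fin n) (j : Fin m) :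
    (((lam : ℂ) • (1 : Matrix (Fin m) (Fin m) ℂ) + A * Aᴴ).updateRow j
        (fun k => Aᴴ i k)).det =
      ∑ s ∈ Finset.Icc 1 m,
        (∑ α ∈ (Finset.powersetCard s (Finset.univ : Finset (Fin m))).filter
            (fun α => j ∈ α),
          ((A * Aᴴ).updateRow j (fun k => Aᴴ i k)).pminor α) * (lam : ℂ) ^ (m - s) := by
  classical
  set r : Fin m → ℂ := fun k => Aᴴ i k with hr
  set B : Matrix (Fin m) (Fin m) ℂ := A * Aᴴ with hB
  set v : Matrix (Fin m) (Fin m) ℂ := B.updateRow j r with hv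
  set u : Fin m → Fin m → ℂ :=
    fun k => if k = j then (0 : Fin m → ℂ) else (lam : ℂ) • (Pi.single k 1 : Fin m → ℂ) with hu
  have hM : ((lam : ℂ) • (1 : Matrix (Fin m) (Fin m) ℂ) + B).updateRow j r
      = Matrix.of (fun k l => u k l + v k l) := by
    ext k l
    by_cases hk : k = j
    · subst hk
      simp [u, v, Matrix.updateRow_self]
    · have h1 : u k l = if k = l then (lam : ℂ) else 0 := by
        simp only [u, if_neg hk, Pi.smul_apply, Pi.single_apply, smul_eq_mul]
        by_cases hkl : k = l <;> simp [hkl, eq_comm]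
      have h2 : v k l = B k l := by simp [v, Matrix.updateRow_ne hk]
      simp [Matrix.updateRow_ne hk, Matrix.one_apply, h1, h2]
  have key : ((((lam : ℂ) • (1 : Matrix (Fin m) (Fin m) ℂ) + B).updateRow j r)).det
      = ∑ α ∈ Finset.univ.filter (fun α : Finset (Fin m) => j ∈ α),
          v.pminor α * (lam : ℂ) ^ (m - α.card) := by
    rw [hM]
    calc (Matrix.of (fun k l => u k l + v k l)).det
        = ∑ S : Finset (Fin m), Matrix.detRowAlternating (S.piecewise u (fun k l => v k l)) :=
          Matrix.detRowAlternating.toMultilinearMap.map_add_univ u (fun k l => v k l)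
      _ = ∑ S ∈ Finset.univ.filter (fun S : Finset (Fin m) => j ∉ S),
            Matrix.detRowAlternating (S.piecewise u (fun k l => v k l)) := by
          refine (Finset.sum_filter_of_ne ?_).symm
          intro S _ hne hjS
          exact absurd (Matrix.detRowAlternating.toMultilinearMap.map_coord_zero j
            (by simp [Finset.piecewise_eq_of_mem _ _ _ hjS, u])) hne
      _ = ∑ S ∈ Finset.univ.filter (fun S : Finset (Fin m) => j ∉ S),
            (lam : ℂ) ^ S.card * v.pminor Sᶜ := by
          refine Finset.sum_congr rfl fun S hS => ?_
          have hj : j ∉ S := (Finset.mem_filter.1 hS).2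
          have hw : S.piecewise u (fun k l => v k l) =
              S.piecewise
                (fun k => (fun _ : Fin m => (lam : ℂ)) k •
                  (S.piecewise (fun k => (Pi.single k 1 : Fin m → ℂ)) v) k)
                (S.piecewise (fun k => (Pi.single k 1 : Fin m → ℂ)) v) := by
            funext k
            by_cases hk : k ∈ S
            · have hkj : k ≠ j := fun h => hj (h ▸ hk)
              simp [Finset.piecewise_eq_of_mem _ _ _ hk, u, hkj]
              exact congrArg _ (Finset.piecewise_eq_of_mem S (fun k => (Pi.single k 1 : Fin m → ℂ)) v hk).symm
            · simp [Finset.piecewise_eq_of_notMem _ _ _ hk]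
              exact (Finset.piecewise_eq_of_notMem S (fun k => (Pi.single k 1 : Fin m → ℂ)) v hk).symm
          rw [hw]
          refine (Matrix.detRowAlternating.toMultilinearMap.map_piecewise_smul
            (fun _ : Fin m => (lam : ℂ))
            (S.piecewise (fun k => (Pi.single k 1 : Fin m → ℂ)) v) S).trans ?_
          rw [Finset.prod_const, smul_eq_mul]
          congr 1
          exact det_piecewise_single v S
      _ = ∑ α ∈ Finset.univ.filter (fun α : Finset (Fin m) => j ∈ α),
            v.pminor α * (lam : ℂ) ^ (m - α.card) := by
          refine Finset.sum_nbij' (fun S => Sᶜ) (fun α => αᶜ) ?_ ?_ ?_ ?_ ?_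
          · intro S hS
            simp only [Finset.mem_filter, Finset.mem_univ, true_and] at hS ⊢
            simpa using hS
          · intro α hα
            simp only [Finset.mem_filter, Finset.mem_univ, true_and] at hα ⊢
            simp [hα]
          · intro S _; simp
          · intro α _; simp
          · intro S _
            have hcard : Sᶜ.card = m - S.card := by
              simp [Finset.card_compl]
            have hS : S.card ≤ m := by
              simpa using Finset.card_le_univ S
            rw [hcard, Nat.sub_sub_self hS, mul_comm]
  have rhsEq : (∑ s ∈ Finset.Icc 1 m,
        (∑ α ∈ (Finset.powersetCard s (Finset.univ : Finset (Fin m))).filter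
            (fun α => j ∈ α), v.pminor α) * (lam : ℂ) ^ (m - s))
      = ∑ α ∈ Finset.univ.filter (fun α : Finset (Fin m) => j ∈ α),
          v.pminor α * (lam : ℂ) ^ (m - α.card) := by
    have hT : ∀ s : ℕ,
        (Finset.powersetCard s (Finset.univ : Finset (Fin m))).filter (fun α => j ∈ α)
          = (Finset.univ.filter (fun α : Finset (Fin m) => j ∈ α)).filter
              (fun α => α.card = s) := by
      intro s
      rw [Finset.powersetCard_eq_filter, Finset.powerset_univ, Finset.filter_comm]
    calc (∑ s ∈ Finset.Icc 1 m,
        (∑ α ∈ (Finset.powersetCard s (Finset.univ : Finset (Fin m))).filter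
            (fun α => j ∈ α), v.pminor α) * (lam : ℂ) ^ (m - s))
        = ∑ s ∈ Finset.Icc 1 m,
            ∑ α ∈ (Finset.univ.filter (fun α : Finset (Fin m) => j ∈ α)).filter
                (fun α => α.card = s),
              v.pminor α * (lam : ℂ) ^ (m - α.card) := by
          refine Finset.sum_congr rfl fun s _ => ?_
          rw [hT s, Finset.sum_mul]
          refine Finset.sum_congr rfl fun α hα => ?_
          rw [(Finset.mem_filter.1 hα).2]
      _ = ∑ α ∈ Finset.univ.filter (fun α : Finset (Fin m) => j ∈ α),
            v.pminor α * (lam : ℂ) ^ (m - α.card) := by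
          refine Finset.sum_fiberwise_of_maps_to (fun α hα => ?_) _
          have hj : j ∈ α := (Finset.mem_filter.1 hα).2
          have h1 : 1 ≤ α.card := Finset.card_pos.2 ⟨j, hj⟩
          have h2 : α.card ≤ m := by simpa using Finset.card_le_univ α
          exact Finset.mem_Icc.2 ⟨h1, h2⟩
  rw [key]
  exact rhsEq.symm
end

section
/- Let A be an m×n complex matrix of rank r, where r < min{m,n} or r = n < m. Then the projection matrix Q = AA⁺ satisfies, for all i, j ∈ {1,…,m}: q_{ij} = ( Σ_{α ∈ I_{r,m}{j}} |(((AA*)_{j.}(g_{i.}))_α^α| ) / ( Σ_{α ∈ I_{r,m}} |((AA*))_α^α| ), where g_{i.} denotes the i-th row of AA*. -/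
open Matrix

section Aux

open Finset Equiv Equiv.Perm

variable {m r : ℕ}

private lemma detMulAux {W : Matrix (Fin r) (Fin m) ℂ} {U : Matrix (Fin m) (Fin r) ℂ}
    {p : Fin r → Fin m} (H : ¬Function.Injective p) :
    (∑ σ : Perm (Fin r), (sign σ : ℂ) * ∏ x, W (σ x) (p x) * U (p x) x) = 0 := by
  obtain ⟨i, j, hpij, hij⟩ : ∃ i j, p i = p j ∧ i ≠ j := by
    rw [Function.Injective] at H
    push_neg at H
    obtain ⟨i, j, h1, h2⟩ := H
    exact ⟨i, j, h1, h2⟩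
  exact
    Finset.sum_involution (fun σ _ => σ * Equiv.swap i j)
      (fun σ _ => by
        have : (∏ x, W (σ x) (p x)) = ∏ x, W ((σ * Equiv.swap i j) x) (p x) :=
          Fintype.prod_equiv (Equiv.swap i j) _ _ (by simp [apply_swap_eq_self hpij])
        simp [this, sign_swap hij, -sign_swap', Finset.prod_mul_distrib])
      (fun σ _ _ => (not_congr mul_swap_eq_iff).mpr hij) (fun _ _ => Finset.mem_univ _)
      fun σ _ => mul_swap_involutive i j σ

private lemma sumFunPerm (W : Matrix (Fin r) (Fin m) ℂ) (U : Matrix (Fin m) (Fin r) ℂ) :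
    det (W * U) = ∑ p : Fin r → Fin m, ∑ σ : Perm (Fin r),
      (sign σ : ℂ) * ∏ x, W (σ x) (p x) * U (p x) x := by
  simp only [det_apply', show ∀ (a b : Fin r), (W*U) a b = ∑ k, W a k * U k b from
    fun _ _ => mul_apply, Finset.prod_univ_sum, Finset.mul_sum, Fintype.piFinset_univ]
  rw [Finset.sum_comm]

private lemma sumPermPerm (M N : Matrix (Fin r) (Fin r) ℂ) :
    ∑ τ : Perm (Fin r), ∑ σ : Perm (Fin r),
      (sign σ : ℂ) * ∏ x, M (σ x) (τ x) * N (τ x) x = det M * det N := by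
  rw [← det_mul, sumFunPerm]
  rw [show (∑ p : Fin r → Fin r, ∑ σ : Perm (Fin r),
      (sign σ : ℂ) * ∏ x, M (σ x) (p x) * N (p x) x)
    = ∑ p : Fin r → Fin r with Function.Injective p, ∑ σ : Perm (Fin r),
      (sign σ : ℂ) * ∏ x, M (σ x) (p x) * N (p x) x from
    (Finset.sum_subset (Finset.filter_subset _ _)
      fun f _ hbij ↦ detMulAux (by simpa using hbij)).symm]
  refine Finset.sum_bij'
    (i := fun (τ : Perm (Fin r)) _ => ⇑τ)
    (j := fun (p : Fin r → Fin r) (hp : p ∈ Finset.univ.filter Function.Injective) =>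
      Equiv.ofBijective p (Finite.injective_iff_bijective.mp (Finset.mem_filter.mp hp).2))
    (fun τ _ => Finset.mem_filter.mpr ⟨Finset.mem_univ _, τ.injective⟩)
    (fun _ _ => Finset.mem_univ _)
    (fun τ _ => by ext x; rfl) (fun p hp => rfl) (fun τ _ => rfl)

private lemma cauchyBinet (W : Matrix (Fin r) (Fin m) ℂ) (U : Matrix (Fin m) (Fin r) ℂ) :
    det (W * U) = ∑ α ∈ (Finset.powersetCard r (Finset.univ : Finset (Fin m))).attach,
      det (W.submatrix id (α.1.orderEmbOfFin (Finset.mem_powersetCard_univ.mp α.2)))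
        * det (U.submatrix (α.1.orderEmbOfFin (Finset.mem_powersetCard_univ.mp α.2)) id) := by
  rw [sumFunPerm]
  rw [show (∑ p : Fin r → Fin m, ∑ σ : Perm (Fin r),
      (sign σ : ℂ) * ∏ x, W (σ x) (p x) * U (p x) x)
    = ∑ p : Fin r → Fin m with Function.Injective p, ∑ σ : Perm (Fin r),
      (sign σ : ℂ) * ∏ x, W (σ x) (p x) * U (p x) x from
    (Finset.sum_subset (Finset.filter_subset _ _)
      fun f _ h ↦ detMulAux (by simpa using h)).symm]
  rw [← Finset.sum_fiberwise_of_maps_to (g := fun p => Finset.image p Finset.univ)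
    (t := Finset.powersetCard r (Finset.univ : Finset (Fin m)))
    (fun p hp => by
      rw [Finset.mem_powersetCard_univ]
      rw [Finset.card_image_of_injective _ (Finset.mem_filter.mp hp).2]
      simp)]
  rw [← Finset.sum_attach (Finset.powersetCard r (Finset.univ : Finset (Fin m)))]
  refine Finset.sum_congr rfl ?_
  rintro ⟨α, hα⟩ -
  have hcard : α.card = r := Finset.mem_powersetCard_univ.mp hα
  set emb := α.orderEmbOfFin hcard with hemb
  have hembimg : Finset.image (⇑emb) Finset.univ = α := by
    ext x
    simp only [Finset.mem_image, Finset.mem_univ, true_and]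
    constructor
    · rintro ⟨k, rfl⟩; exact Finset.orderEmbOfFin_mem α hcard k
    · intro hx
      have : x ∈ Set.range ⇑emb := by
        rw [hemb, Finset.range_orderEmbOfFin]; exact hx
      obtain ⟨k, hk⟩ := this
      exact ⟨k, hk⟩
  have key : (∑ p ∈ (Finset.univ.filter (fun p : Fin r → Fin m => Function.Injective p)).filter
        (fun p => Finset.image p Finset.univ = α),
      ∑ σ : Perm (Fin r), (sign σ : ℂ) * ∏ x, W (σ x) (p x) * U (p x) x)
      = ∑ τ : Perm (Fin r), ∑ σ : Perm (Fin r),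
        (sign σ : ℂ) * ∏ x, (W.submatrix id ⇑emb) (σ x) (τ x) * (U.submatrix ⇑emb id) (τ x) x := by
    refine Finset.sum_bij'
      (i := fun (p : Fin r → Fin m)
        (hp : p ∈ (Finset.univ.filter (fun p : Fin r → Fin m => Function.Injective p)).filter
          (fun p => Finset.image p Finset.univ = α))
          => Equiv.ofBijective
            (fun k => (α.orderIsoOfFin hcard).symm ⟨p k, by
              have h2 := (Finset.mem_filter.mp hp).2
              rw [← h2]
              exact Finset.mem_image_of_mem p (Finset.mem_univ k)⟩)
            (Finite.injective_iff_bijective.mp (fun a b hab => by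
              have h1 := (Finset.mem_filter.mp (Finset.mem_filter.mp hp).1).2
              have := congrArg (fun z => ((α.orderIsoOfFin hcard) z : Fin m)) hab
              simp only [OrderIso.apply_symm_apply] at this
              exact h1 this)))
      (j := fun (τ : Perm (Fin r)) _ => ⇑emb ∘ ⇑τ)
      (fun _ _ => Finset.mem_univ _)
      (fun τ _ => by
        refine Finset.mem_filter.mpr ⟨Finset.mem_filter.mpr
          ⟨Finset.mem_univ _, emb.injective.comp τ.injective⟩, ?_⟩
        show Finset.image (⇑emb ∘ ⇑τ) Finset.univ = α
        rw [← Finset.image_image, Finset.image_univ_equiv τ]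
        exact hembimg)
      (fun p hp => by
        funext k
        show emb ((α.orderIsoOfFin hcard).symm ⟨p k, _⟩) = p k
        rw [← Finset.coe_orderIsoOfFin_apply, OrderIso.apply_symm_apply])
      (fun τ _ => by
        ext k
        show ((α.orderIsoOfFin hcard).symm ⟨emb (τ k), _⟩ : Fin r).val = (τ k).val
        congr 1
        rw [OrderIso.symm_apply_eq]
        exact Subtype.ext (Finset.coe_orderIsoOfFin_apply α hcard (τ k)))
      (fun p hp => by
        refine Finset.sum_congr rfl fun σ _ => ?_
        congr 1
        refine Finset.prod_congr rfl fun x _ => ?_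
        simp only [Matrix.submatrix_apply, id_eq, Equiv.ofBijective, Equiv.coe_fn_mk]
        rw [← Finset.coe_orderIsoOfFin_apply, OrderIso.apply_symm_apply])
  rw [key, sumPermPerm]

private lemma existsFactor {Q : Matrix (Fin m) (Fin m) ℂ} (hH : Qᴴ = Q)
    (hQQ : Q * Q = Q) (hrank : Q.rank = r) :
    ∃ U : Matrix (Fin m) (Fin r) ℂ, Uᴴ * U = 1 ∧ U * Uᴴ = Q := by
  have hQ : Q.IsHermitian := hH
  set V : Matrix (Fin m) (Fin m) ℂ := (hQ.eigenvectorUnitary : Matrix (Fin m) (Fin m) ℂ) with hV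
  have hV1 : star V * V = 1 := hQ.eigenvectorUnitary.prop.1
  set d : Fin m → ℂ := fun k => (hQ.eigenvalues k : ℂ) with hd
  have hspec : Q = V * diagonal d * star V := hQ.spectral_theorem
  have hsv : ∀ M : Matrix (Fin m) (Fin m) ℂ, M * star V * V = M := fun M => by
    rw [Matrix.mul_assoc, hV1, Matrix.mul_one]
  have hdd : diagonal d * diagonal d = diagonal d := by
    have h := hQQ
    rw [hspec] at h
    have h2 := congrArg (fun M => star V * M * V) h
    simp only [← Matrix.mul_assoc] at h2
    simp only [hsv] at h2
    simpa [hV1, ← Matrix.mul_assoc] using h2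
  have h01 : ∀ k, d k = 0 ∨ d k = 1 := by
    intro k
    have := congrFun (congrFun hdd k) k
    simp only [Matrix.diagonal_mul_diagonal, Matrix.diagonal_apply_eq] at this
    rcases mul_eq_zero.mp (show d k * (d k - 1) = 0 by ring_nf; linear_combination this) with h | h
    · exact Or.inl h
    · exact Or.inr (by linear_combination h)
  set t : Finset (Fin m) := Finset.univ.filter (fun k => hQ.eigenvalues k ≠ 0) with htdef
  have ht : t.card = r := by
    have := hQ.rank_eq_card_non_zero_eigs
    rw [hrank] at this
    rw [htdef, ← Fintype.card_subtype]
    exact this.symm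
  set e := t.orderEmbOfFin ht with he
  refine ⟨V.submatrix id ⇑e, ?_, ?_⟩
  · ext k l
    have h1 : (star V * V) (e k) (e l) = (1 : Matrix (Fin m) (Fin m) ℂ) (e k) (e l) := by
      rw [hV1]
    simp only [Matrix.mul_apply, Matrix.star_apply, Matrix.one_apply,
      EmbeddingLike.apply_eq_iff_eq] at h1
    simp only [Matrix.mul_apply, Matrix.conjTranspose_apply, Matrix.submatrix_apply, id_eq,
      Matrix.one_apply]
    exact h1
  · ext a b
    rw [hspec]
    have hsum : (V * diagonal d * star V) a b = ∑ k, V a k * d k * star (V b k) := by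
      rw [Matrix.mul_apply]
      refine Finset.sum_congr rfl fun k _ => ?_
      rw [Matrix.mul_diagonal, Matrix.star_apply]
    rw [hsum]
    have hsub : ∑ k, V a k * d k * star (V b k) = ∑ k ∈ t, V a k * d k * star (V b k) := by
      refine (Finset.sum_subset (Finset.subset_univ t) fun k _ hk => ?_).symm
      have : hQ.eigenvalues k = 0 := by
        by_contra h
        exact hk (Finset.mem_filter.mpr ⟨Finset.mem_univ _, h⟩)
      simp [hd, this]
    rw [hsub]
    have htmap : t = Finset.univ.map (e.toEmbedding) := by
      ext x
      simp only [Finset.mem_map, Finset.mem_univ, true_and]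
      constructor
      · intro hx
        have : x ∈ Set.range ⇑e := by rw [he, Finset.range_orderEmbOfFin]; exact hx
        obtain ⟨k, hk⟩ := this
        exact ⟨k, hk⟩
      · rintro ⟨k, rfl⟩
        exact Finset.orderEmbOfFin_mem t ht k
    rw [htmap, Finset.sum_map]
    simp only [Matrix.mul_apply, Matrix.conjTranspose_apply, Matrix.submatrix_apply, id_eq,
      RelEmbedding.coe_toEmbedding]
    refine Finset.sum_congr rfl fun k _ => ?_
    have hdk : d (e k) = 1 := by
      have hmem : e k ∈ t := Finset.orderEmbOfFin_mem t ht k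
      have hne : hQ.eigenvalues (e k) ≠ 0 := (Finset.mem_filter.mp hmem).2
      rcases h01 (e k) with h | h
      · have h' : (hQ.eigenvalues (e k) : ℂ) = 0 := h
        exact absurd (by exact_mod_cast h') hne
      · exact h
    rw [hdk]
    ring

private lemma pminor_mul (U : Matrix (Fin m) (Fin r) ℂ) (W : Matrix (Fin r) (Fin m) ℂ)
    (α : Finset (Fin m)) (hcard : α.card = r) :
    (U * W).pminor α =
      det (W.submatrix id ⇑(α.orderEmbOfFin hcard)) * det (U.submatrix ⇑(α.orderEmbOfFin hcard) id) := by
  unfold Matrix.pminor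
  rw [← Matrix.det_submatrix_equiv_self (α.orderIsoOfFin hcard).toEquiv, Matrix.submatrix_submatrix]
  have hco : ((fun i : {x // x ∈ α} => (i : Fin m)) ∘ ⇑(α.orderIsoOfFin hcard).toEquiv)
      = ⇑(α.orderEmbOfFin hcard) := by
    funext k; exact Finset.coe_orderIsoOfFin_apply α hcard k
  rw [hco]
  rw [show (U * W).submatrix ⇑(α.orderEmbOfFin hcard) ⇑(α.orderEmbOfFin hcard)
      = U.submatrix ⇑(α.orderEmbOfFin hcard) (Equiv.refl (Fin r))
        * W.submatrix (⇑(Equiv.refl (Fin r))) ⇑(α.orderEmbOfFin hcard) from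
    (Matrix.submatrix_mul_equiv U W _ (Equiv.refl (Fin r)) _).symm]
  rw [Matrix.det_mul]
  rw [show ⇑(Equiv.refl (Fin r)) = id from rfl]
  ring

private lemma sum_pminor_mul (U : Matrix (Fin m) (Fin r) ℂ) (W : Matrix (Fin r) (Fin m) ℂ) :
    ∑ α ∈ Finset.powersetCard r (Finset.univ : Finset (Fin m)), (U * W).pminor α
      = det (W * U) := by
  rw [cauchyBinet, ← Finset.sum_attach (Finset.powersetCard r Finset.univ)]
  exact Finset.sum_congr rfl fun α _ =>
    pminor_mul U W α.1 (Finset.mem_powersetCard_univ.mp α.2)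

private lemma updateRow_mul' (U : Matrix (Fin m) (Fin r) ℂ) (W : Matrix (Fin r) (Fin m) ℂ)
    (j : Fin m) (u : Fin r → ℂ) :
    (U.updateRow j u) * W = (U * W).updateRow j (fun b => ∑ k, u k * W k b) := by
  ext a b
  by_cases h : a = j
  · subst h
    simp [Matrix.mul_apply, Matrix.updateRow_self]
  · simp [Matrix.mul_apply, Matrix.updateRow_ne h]

private lemma pminor_updateRow_not_mem {M : Matrix (Fin m) (Fin m) ℂ} {c : Fin m → ℂ}
    {j : Fin m} {α : Finset (Fin m)} (h : j ∉ α) :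
    (M.updateRow j c).pminor α = M.pminor α := by
  unfold Matrix.pminor
  congr 1
  ext ⟨a, ha⟩ ⟨b, hb⟩
  exact congrFun (Matrix.updateRow_ne (fun hh : a = j => h (hh ▸ ha))) b

private lemma pminor_updateRow_zero {M : Matrix (Fin m) (Fin m) ℂ}
    {j : Fin m} {α : Finset (Fin m)} (h : j ∈ α) :
    (M.updateRow j 0).pminor α = 0 := by
  unfold Matrix.pminor
  apply Matrix.det_eq_zero_of_row_eq_zero ⟨j, h⟩
  intro l
  simp [Matrix.updateRow_self]

private lemma det_conjT_mul_updateRow (U : Matrix (Fin m) (Fin r) ℂ) (hU1 : Uᴴ * U = 1)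
    (j : Fin m) (c : Fin r → ℂ) :
    det (Uᴴ * (U.updateRow j c)) = 1 + ∑ l, (c l - U j l) * star (U j l) := by
  have hupd : Uᴴ * (U.updateRow j c) = 1 + Matrix.replicateCol (Fin 1) (fun k => star (U j k))
      * Matrix.replicateRow (Fin 1) (fun l => c l - U j l) := by
    ext k l
    have hsum : ∀ a : Fin m, star (U a k) * (U.updateRow j c) a l
        = star (U a k) * U a l + (if a = j then star (U j k) * (c l - U j l) else 0) := by
      intro a
      by_cases h : a = j
      · subst h
        simp [Matrix.updateRow_self]
        ring
      · simp [Matrix.updateRow_ne h, h]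
    have : (Uᴴ * (U.updateRow j c)) k l
        = (Uᴴ * U) k l + star (U j k) * (c l - U j l) := by
      rw [Matrix.mul_apply, Matrix.mul_apply]
      simp only [Matrix.conjTranspose_apply]
      rw [Finset.sum_congr rfl (fun a _ => hsum a), Finset.sum_add_distrib,
        Finset.sum_ite_eq' Finset.univ j]
      simp
    rw [this, hU1]
    simp [Matrix.mul_apply, Matrix.replicateCol, Matrix.replicateRow]
  rw [hupd]
  exact (Matrix.det_one_add_replicateCol_mul_replicateRow (ι := Fin 1) _ _).trans rfl

open scoped ComplexOrder in
private lemma star_dot_self_zero {k : ℕ} {w : Fin k → ℂ} (h : dotProduct (star w) w = 0) :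
    w = 0 :=
  dotProduct_star_self_eq_zero.mp h

end Aux

/-- Determinantal representation of the projection matrix `Q = AA⁺`,
where `A⁺ = X` is the Moore–Penrose inverse of `A` (characterized by the Penrose
equations), for `A` of rank `r` with `r < min m n` or `r = n < m`. -/
theorem projection_self_mul_moorePenrose_det_repr
    (m n r : ℕ) (A : Matrix (Fin m) (Fin n) ℂ) (hA : A.rank = r)
    (hr : r < min m n ∨ (r = n ∧ n < m))
    (X : Matrix (Fin n) (Fin m) ℂ)
    (h1 : A * X * A = A) (h2 : X * A * X = X)
    (h3 : (A * X)ᴴ = A * X) (h4 : (X * A)ᴴ = X * A)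
    (i j : Fin m) :
    (A * X) i j =
      (∑ α ∈ (Finset.powersetCard r (Finset.univ : Finset (Fin m))).filter
          (fun α => j ∈ α),
        ((A * Aᴴ).updateRow j (fun k => (A * Aᴴ) i k)).pminor α) /
      (∑ α ∈ Finset.powersetCard r (Finset.univ : Finset (Fin m)),
        (A * Aᴴ).pminor α) := by
  classical
  have hQQ : (A * X) * (A * X) = A * X := by
    rw [← Matrix.mul_assoc, h1]
  have hrankQ : (A * X).rank = r := by
    refine le_antisymm ((Matrix.rank_mul_le_left A X).trans_eq hA) ?_
    calc r = A.rank := hA.symm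
    _ = ((A * X) * A).rank := by rw [h1]
    _ ≤ (A * X).rank := Matrix.rank_mul_le_left _ A
  obtain ⟨U, hU1, hU2⟩ := existsFactor h3 hQQ hrankQ
  set S : Matrix (Fin r) (Fin r) ℂ := Uᴴ * (A * Aᴴ) * U with hSdef
  have hQG : (A * X) * (A * Aᴴ) = A * Aᴴ := by rw [← Matrix.mul_assoc, h1]
  have hGQ : (A * Aᴴ) * (A * X) = A * Aᴴ := by
    have hc := congrArg conjTranspose hQG
    simpa [Matrix.conjTranspose_mul, h3, ← Matrix.mul_assoc] using hc
  have hGfact : A * Aᴴ = U * (S * Uᴴ) := by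
    have hassoc : U * (S * Uᴴ) = (U * Uᴴ) * (A * Aᴴ) * (U * Uᴴ) := by
      simp only [hSdef, Matrix.mul_assoc]
    rw [hassoc, hU2, hQG, hGQ]
  -- nonvanishing of det S
  have hdet : det S ≠ 0 := by
    intro h0
    obtain ⟨v, hv, hSv⟩ := Matrix.exists_mulVec_eq_zero_iff.mpr h0
    set w : Fin n → ℂ := (Aᴴ * U) *ᵥ v with hw
    have hwz : w = 0 := by
      have hfac : S = (Uᴴ * A) * (Aᴴ * U) := by
        simp only [hSdef, Matrix.mul_assoc]
      have hstar : star w = star v ᵥ* (Uᴴ * A) := by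
        rw [hw, Matrix.star_mulVec]
        congr 1
        rw [Matrix.conjTranspose_mul, Matrix.conjTranspose_conjTranspose]
      have hz : star w ⬝ᵥ w = 0 := by
        rw [hstar, hw, ← Matrix.dotProduct_mulVec, Matrix.mulVec_mulVec, ← hfac, hSv,
          dotProduct_zero]
      exact star_dot_self_zero hz
    have hUv : U *ᵥ v = 0 := by
      have e1 : (A * X) *ᵥ (U *ᵥ v) = U *ᵥ v := by
        rw [← hU2, Matrix.mulVec_mulVec, Matrix.mul_assoc, hU1, Matrix.mul_one]
      have hAv : Aᴴ *ᵥ (U *ᵥ v) = 0 := by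
        rw [Matrix.mulVec_mulVec, ← hw]
        exact hwz
      have e2 : (A * X) *ᵥ (U *ᵥ v) = 0 := by
        rw [← h3, Matrix.conjTranspose_mul, ← Matrix.mulVec_mulVec, hAv, Matrix.mulVec_zero]
      rw [← e1, e2]
    apply hv
    have : (Uᴴ * U) *ᵥ v = v := by rw [hU1, Matrix.one_mulVec]
    rw [← this, ← Matrix.mulVec_mulVec, hUv]
    simp
  -- denominator
  have hden : (∑ α ∈ Finset.powersetCard r (Finset.univ : Finset (Fin m)),
      (A * Aᴴ).pminor α) = det S := by
    rw [hGfact, sum_pminor_mul, Matrix.mul_assoc, hU1, Matrix.mul_one]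
  -- the two updateRow factorizations
  have hG' : (A * Aᴴ).updateRow j (fun k => (A * Aᴴ) i k)
      = (U.updateRow j (U i)) * (S * Uᴴ) := by
    rw [hGfact, updateRow_mul']
    congr 1
  have hG0 : (U.updateRow j 0) * (S * Uᴴ)
      = (U * (S * Uᴴ)).updateRow j 0 := by
    rw [updateRow_mul']
    have hz : (fun b => ∑ k, (0 : Fin r → ℂ) k * (S * Uᴴ) k b) = (0 : Fin m → ℂ) := by
      funext b; simp
    rw [hz]
  -- sums of pminors of the modified matrices
  have hsumG' : (∑ α ∈ Finset.powersetCard r (Finset.univ : Finset (Fin m)),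
      ((A * Aᴴ).updateRow j (fun k => (A * Aᴴ) i k)).pminor α)
      = det S * (1 + ((A * X) i j - (A * X) j j)) := by
    rw [hG', sum_pminor_mul, Matrix.mul_assoc, Matrix.det_mul,
      det_conjT_mul_updateRow U hU1 j (U i)]
    congr 2
    have : ∀ l, (U i l - U j l) * star (U j l)
        = U i l * star (U j l) - U j l * star (U j l) := fun l => by ring
    rw [Finset.sum_congr rfl fun l _ => this l, Finset.sum_sub_distrib, ← hU2]
    rw [Matrix.mul_apply, Matrix.mul_apply]
    simp [Matrix.conjTranspose_apply]
  have hsumG0 : (∑ α ∈ (Finset.powersetCard r (Finset.univ : Finset (Fin m))).filter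
      (fun α => j ∉ α),
      ((A * Aᴴ).updateRow j (fun k => (A * Aᴴ) i k)).pminor α)
      = det S * (1 - (A * X) j j) := by
    have step1 : ∀ α ∈ (Finset.powersetCard r (Finset.univ : Finset (Fin m))).filter
        (fun α => j ∉ α),
        ((A * Aᴴ).updateRow j (fun k => (A * Aᴴ) i k)).pminor α
          = ((U * (S * Uᴴ)).updateRow j 0).pminor α := by
      intro α hα
      have hj : j ∉ α := (Finset.mem_filter.mp hα).2
      rw [pminor_updateRow_not_mem hj, pminor_updateRow_not_mem hj, hGfact]
    rw [Finset.sum_congr rfl step1]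
    have split := Finset.sum_filter_add_sum_filter_not
      (Finset.powersetCard r (Finset.univ : Finset (Fin m))) (fun α => j ∉ α)
      (fun α => ((U * (S * Uᴴ)).updateRow j 0).pminor α)
    have hvanish : (∑ α ∈ (Finset.powersetCard r (Finset.univ : Finset (Fin m))).filter
        (fun α => ¬ j ∉ α), ((U * (S * Uᴴ)).updateRow j 0).pminor α) = 0 := by
      refine Finset.sum_eq_zero fun α hα => ?_
      exact pminor_updateRow_zero (not_not.mp (Finset.mem_filter.mp hα).2)
    have htot : (∑ α ∈ Finset.powersetCard r (Finset.univ : Finset (Fin m)),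
        ((U * (S * Uᴴ)).updateRow j 0).pminor α) = det S * (1 - (A * X) j j) := by
      rw [← hG0, sum_pminor_mul, Matrix.mul_assoc, Matrix.det_mul,
        det_conjT_mul_updateRow U hU1 j 0]
      congr 2
      have : ∀ l, ((0 : Fin r → ℂ) l - U j l) * star (U j l)
          = -(U j l * star (U j l)) := fun l => by simp only [Pi.zero_apply]; ring
      rw [Finset.sum_congr rfl fun l _ => this l, Finset.sum_neg_distrib, ← hU2]
      rw [Matrix.mul_apply]
      simp [Matrix.conjTranspose_apply]
      ring
    rw [← split, hvanish, add_zero] at htot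
    exact htot
  -- numerator
  have hnum : (∑ α ∈ (Finset.powersetCard r (Finset.univ : Finset (Fin m))).filter
      (fun α => j ∈ α),
      ((A * Aᴴ).updateRow j (fun k => (A * Aᴴ) i k)).pminor α)
      = det S * (A * X) i j := by
    have split := Finset.sum_filter_add_sum_filter_not
      (Finset.powersetCard r (Finset.univ : Finset (Fin m))) (fun α => j ∈ α)
      (fun α => ((A * Aᴴ).updateRow j (fun k => (A * Aᴴ) i k)).pminor α)
    have hnotmem : (∑ α ∈ (Finset.powersetCard r (Finset.univ : Finset (Fin m))).filter
        (fun α => ¬ j ∈ α),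
        ((A * Aᴴ).updateRow j (fun k => (A * Aᴴ) i k)).pminor α)
        = det S * (1 - (A * X) j j) := hsumG0
    have heq := split.trans hsumG'
    rw [hnotmem] at heq
    linear_combination heq
  rw [hnum, hden, mul_comm, mul_div_assoc, div_self hdet, mul_one]
end

section
/- Let A be an m×n complex matrix of rank r with r < min{m,n}, let M be an m×m Hermitian positive definite matrix and N an n×n Hermitian positive definite matrix, and set A♯ = N⁻¹A*M. Then the entries ã⁺_{ij} of the weighted Moore–Penrose inverse A⁺_{M,N} satisfy, for all i ∈ {1,…,n} and j ∈ {1,…,m}: ã⁺_{ij} = ( Σ_{β ∈ J_{r,n}{i}} |(((A♯A)_{.i}(a♯_{.j}))_β^β| ) / ( Σ_{β ∈ J_{r,n}} |((A♯A))_β^β| ), where a♯_{.j} denotes the j-th column of A♯. -/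
open Matrix ComplexOrder

open Polynomial


section Expansion
variable {ι : Type*} [Fintype ι] [DecidableEq ι] {R : Type*} [CommRing R]

lemma det_single_rows (P : Matrix ι ι R) (s : Finset ι) :
    Matrix.det (Matrix.of (s.piecewise (fun a => (Pi.single a 1 : ι → R)) (fun a => P a))) =
      Matrix.det (P.submatrix (fun x : {x // ¬ x ∈ s} => x.1) (fun x : {x // ¬ x ∈ s} => x.1)) := by
  rw [← Matrix.det_submatrix_equiv_self (Equiv.sumCompl (fun x => x ∈ s))]
  have : (Matrix.of (s.piecewise (fun a => (Pi.single a 1 : ι → R)) (fun a => P a))).submatrix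
      (Equiv.sumCompl (fun x => x ∈ s)) (Equiv.sumCompl (fun x => x ∈ s)) =
      Matrix.fromBlocks 1 0
        (P.submatrix (fun x : {x // ¬ x ∈ s} => x.1) (fun x : {x // x ∈ s} => x.1))
        (P.submatrix (fun x : {x // ¬ x ∈ s} => x.1) (fun x : {x // ¬ x ∈ s} => x.1)) := by
    ext a b
    cases a with
    | inl a => cases b with
      | inl b =>
        change s.piecewise (fun a => (Pi.single a 1 : ι → R)) (fun a => P a) (a : ι) (b : ι) =
          (1 : Matrix s s R) a b
        rw [Finset.piecewise_eq_of_mem _ _ _ a.2, Pi.single_apply, one_apply]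
        by_cases h : a = b
        · subst h; simp
        · simp [h, Ne.symm h]
      | inr b =>
        have : (b : ι) ≠ a := fun h => b.2 (h ▸ a.2)
        simp [Finset.piecewise_eq_of_mem _ _ _ a.2, Pi.single_apply, this]
    | inr a => cases b with
      | inl b => simp [Finset.piecewise_eq_of_notMem _ _ _ a.2]
      | inr b => simp [Finset.piecewise_eq_of_notMem _ _ _ a.2]
  rw [this, Matrix.det_fromBlocks_zero₁₂, Matrix.det_one, one_mul]

/-- multilinear expansion of `det (diagonal d + P)` over subsets. -/
lemma det_diag_add_expand (d : ι → R) (P : Matrix ι ι R) :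
    Matrix.det (Matrix.of fun a b => (if a = b then d a else 0) + P a b) =
      ∑ s : Finset ι, (∏ a ∈ s, d a) *
        Matrix.det (P.submatrix (fun x : {x // ¬ x ∈ s} => x.1)
          (fun x : {x // ¬ x ∈ s} => x.1)) := by
  have h0 : Matrix.of (fun a b => (if a = b then d a else 0) + P a b) =
      Matrix.of ((fun a => d a • (Pi.single a 1 : ι → R)) + (fun a => P a)) := by
    ext a b
    by_cases h : a = b <;> simp [Pi.single_apply, h, eq_comm]
  rw [h0]
  have := (Matrix.detRowAlternating : (ι → R) [⋀^ι]→ₗ[R] R).toMultilinearMap.map_add_univ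
    (fun a => d a • (Pi.single a 1 : ι → R)) (fun a => P a)
  have hdet : Matrix.det (Matrix.of ((fun a => d a • (Pi.single a 1 : ι → R)) + fun a => P a)) =
      (Matrix.detRowAlternating : (ι → R) [⋀^ι]→ₗ[R] R).toMultilinearMap
        ((fun a => d a • (Pi.single a 1 : ι → R)) + fun a => P a) := rfl
  rw [hdet, this]
  refine Finset.sum_congr rfl fun s _ => ?_
  have key : s.piecewise (fun a => d a • (Pi.single a 1 : ι → R)) (fun a => P a) =
      s.piecewise (fun a => d a • (s.piecewise (fun a => (Pi.single a 1 : ι → R)) (fun a => P a)) a)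
        (s.piecewise (fun a => (Pi.single a 1 : ι → R)) (fun a => P a)) := by
    funext a
    by_cases h : a ∈ s <;>
      simp [Finset.piecewise_eq_of_mem _ _ _, Finset.piecewise_eq_of_notMem _ _ _, h]
  rw [key, (Matrix.detRowAlternating :
      (ι → R) [⋀^ι]→ₗ[R] R).toMultilinearMap.map_piecewise_smul d _ s]
  rw [smul_eq_mul]
  congr 1
  exact det_single_rows P s

end Expansion


variable {n : ℕ}

/-- det of submatrix-on-complement of a mapped matrix, as C of a pminor. -/
lemma det_submatrix_compl_map (B : Matrix (Fin n) (Fin n) ℂ) (s : Finset (Fin n)) :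
    Matrix.det ((B.map C).submatrix (fun x : {x // ¬ x ∈ s} => x.1)
      (fun x : {x // ¬ x ∈ s} => x.1)) = C (B.pminor sᶜ) := by
  have h1 : ((B.map C).submatrix (fun x : {x // ¬ x ∈ s} => x.1)
      (fun x : {x // ¬ x ∈ s} => x.1)) =
      ((B.submatrix (fun x : {x // ¬ x ∈ s} => x.1) (fun x : {x // ¬ x ∈ s} => x.1)).map C) := rfl
  rw [h1, ← Polynomial.C.mapMatrix_apply, ← RingHom.map_det]
  congr 1
  unfold Matrix.pminor
  rw [← Matrix.det_submatrix_equiv_self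
    (Equiv.subtypeEquivRight (fun x => (Finset.mem_compl : x ∈ sᶜ ↔ ¬ x ∈ s)))
    (B.submatrix (fun x : {x // ¬ x ∈ s} => x.1) (fun x : {x // ¬ x ∈ s} => x.1))]
  rfl

variable {n : ℕ}

noncomputable def Ypoly (B : Matrix (Fin n) (Fin n) ℂ) : Matrix (Fin n) (Fin n) ℂ[X] :=
  Matrix.of fun a b => (if a = b then (X:ℂ[X]) else 0) + C (B a b)

noncomputable def Gmat (B : Matrix (Fin n) (Fin n) ℂ) (d : ℕ) : Matrix (Fin n) (Fin n) ℂ :=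
  Matrix.of fun i k => ((Matrix.adjugate (Ypoly B)) i k).coeff d

lemma natDegree_Ypoly_entry (B : Matrix (Fin n) (Fin n) ℂ) (a b : Fin n) :
    ((Ypoly B) a b).natDegree ≤ 1 := by
  unfold Ypoly
  refine le_trans (natDegree_add_le _ _) ?_
  simp only [max_le_iff]
  constructor
  · change (if a = b then (X:ℂ[X]) else 0).natDegree ≤ 1
    by_cases h : a = b <;> simp [h]
  · simp

lemma Gmat_high (B : Matrix (Fin n) (Fin n) ℂ) {d : ℕ} (hd : n ≤ d) :
    Gmat B d = 0 := by
  ext i k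
  have hn : 0 < n := i.pos
  show ((Matrix.adjugate (Ypoly B)) i k).coeff d = 0
  rw [Matrix.adjugate_apply, Matrix.det_apply, Polynomial.finset_sum_coeff]
  refine Finset.sum_eq_zero fun σ _ => ?_
  rw [Polynomial.coeff_smul]
  have hdeg : (∏ a : Fin n, ((Ypoly B).updateRow k (Pi.single i 1)) (σ a) a).natDegree ≤ n - 1 := by
    refine le_trans (Polynomial.natDegree_prod_le _ _) ?_
    have hbound : ∀ a : Fin n, (((Ypoly B).updateRow k (Pi.single i 1)) (σ a) a).natDegree ≤
        if σ a = k then 0 else 1 := by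
      intro a
      by_cases h : σ a = k
      · rw [h, if_pos rfl, Matrix.updateRow_self]
        by_cases h' : a = i <;> simp [Pi.single_apply, h']
      · rw [if_neg h, Matrix.updateRow_ne h]
        exact natDegree_Ypoly_entry B _ _
    refine le_trans (Finset.sum_le_sum fun a _ => hbound a) ?_
    have h0 : (if σ (σ.symm k) = k then (0:ℕ) else 1) = 0 := by simp
    rw [← Finset.sum_erase_add _ _ (Finset.mem_univ (σ.symm k)), h0, add_zero]
    refine le_trans (Finset.sum_le_card_nsmul _ _ 1 ?_) ?_
    · intro a _; split <;> omega
    · simp [Finset.card_erase_of_mem]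
  have : (∏ a : Fin n, ((Ypoly B).updateRow k (Pi.single i 1)) (σ a) a).coeff d = 0 :=
    Polynomial.coeff_eq_zero_of_natDegree_lt (by omega)
  rw [this, smul_zero]

lemma Gmat_recurrence (B : Matrix (Fin n) (Fin n) ℂ) {d : ℕ} (hd : 1 ≤ d) :
    Gmat B (d-1) + Gmat B d * B = (((Ypoly B).det).coeff d) • (1 : Matrix (Fin n) (Fin n) ℂ) := by
  have hadj := Matrix.adjugate_mul (Ypoly B)
  ext i k
  have hentry : ∑ l, (Matrix.adjugate (Ypoly B)) i l * (Ypoly B) l k =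
      (Ypoly B).det • (1 : Matrix (Fin n) (Fin n) ℂ[X]) i k := by
    rw [← Matrix.mul_apply, hadj]
    simp [Matrix.smul_apply]
  have hsplit : ∑ l, (Matrix.adjugate (Ypoly B)) i l * (Ypoly B) l k =
      (Matrix.adjugate (Ypoly B)) i k * X +
      ∑ l, (Matrix.adjugate (Ypoly B)) i l * C (B l k) := by
    have hY : ∀ l, Ypoly B l k = (if l = k then (X:ℂ[X]) else 0) + C (B l k) := fun l => rfl
    simp only [hY, mul_add, Finset.sum_add_distrib, mul_ite, mul_zero]
    rw [Finset.sum_ite_eq' Finset.univ k]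
    simp
  rw [hsplit] at hentry
  have hcoeff := congrArg (fun p => p.coeff d) hentry
  rw [Polynomial.coeff_add, Polynomial.finset_sum_coeff] at hcoeff
  have h1 : ((Matrix.adjugate (Ypoly B)) i k * X).coeff d =
      ((Matrix.adjugate (Ypoly B)) i k).coeff (d-1) := by
    have h : d - 1 + 1 = d := by omega
    conv_lhs => rw [← h]
    rw [Polynomial.coeff_mul_X]
  have h2 : ∀ l, ((Matrix.adjugate (Ypoly B)) i l * C (B l k)).coeff d =
      ((Matrix.adjugate (Ypoly B)) i l).coeff d * B l k := by
    intro l; rw [mul_comm, Polynomial.coeff_C_mul, mul_comm]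
  rw [h1, Finset.sum_congr rfl (fun l _ => h2 l)] at hcoeff
  have hL : (Gmat B (d-1) + Gmat B d * B) i k =
      ((Matrix.adjugate (Ypoly B)) i k).coeff (d-1) +
      ∑ l, ((Matrix.adjugate (Ypoly B)) i l).coeff d * B l k := by
    simp [Gmat, Matrix.add_apply, Matrix.mul_apply]
  rw [hL, hcoeff]
  by_cases h : i = k <;> simp [Matrix.smul_apply, Matrix.one_apply, h]

lemma Gmat_closed (B : Matrix (Fin n) (Fin n) ℂ) :
    ∀ s : ℕ, s + 1 ≤ n →
    Gmat B (n - 1 - s) = ∑ t ∈ Finset.range (s+1),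
      ((-1:ℂ)^t * ((Ypoly B).det).coeff (n - (s - t))) • B^t := by
  intro s
  induction s with
  | zero =>
    intro hs
    have h := Gmat_recurrence B (d := n) (by omega)
    rw [Gmat_high B (le_refl n), zero_mul, add_zero] at h
    simpa using h
  | succ s ih =>
    intro hs
    have hrec := Gmat_recurrence B (d := n - 1 - s) (show 1 ≤ n - 1 - s by omega)
    have hd : n - 1 - s - 1 = n - 1 - (s+1) := by omega
    rw [hd] at hrec
    have heq : Gmat B (n-1-(s+1)) =
        (((Ypoly B).det).coeff (n-1-s)) • 1 - Gmat B (n-1-s) * B := eq_sub_of_add_eq hrec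
    rw [heq, ih (by omega), Finset.sum_mul,
      Finset.sum_range_succ'
        (fun t => ((-1:ℂ)^t * ((Ypoly B).det).coeff (n - (s + 1 - t))) • B^t) (s+1)]
    set_option linter.unusedTactic false in
    beta_reduce
    have hterm : ∀ t, ((-1:ℂ)^(t+1) * ((Ypoly B).det).coeff (n - (s + 1 - (t+1)))) • B^(t+1)
        = -(((((-1:ℂ)^t * ((Ypoly B).det).coeff (n - (s - t)))) • B^t) * B) := by
      intro t
      have h' : s + 1 - (t+1) = s - t := by omega
      rw [h', smul_mul_assoc, ← pow_succ, ← neg_smul]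
      congr 1
      ring
    rw [Finset.sum_congr rfl (fun t _ => hterm t)]
    have hf0 : ((-1:ℂ)^0 * ((Ypoly B).det).coeff (n - (s + 1 - 0))) • B^0
        = (((Ypoly B).det).coeff (n-1-s)) • (1 : Matrix (Fin n) (Fin n) ℂ) := by
      have h'' : n - (s + 1 - 0) = n - 1 - s := by omega
      rw [h'', pow_zero, one_mul, pow_zero]
    rw [hf0, Finset.sum_neg_distrib]
    abel

lemma Ypoly_eq (M : Matrix (Fin n) (Fin n) ℂ) :
    Ypoly M = (X:ℂ[X]) • (1 : Matrix (Fin n) (Fin n) ℂ[X]) + M.map C := by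
  ext a b
  by_cases h : a = b <;>
    simp [Ypoly, Matrix.smul_apply, Matrix.one_apply, Matrix.map_apply, h]

lemma Ypoly_diagonal (μ : Fin n → ℂ) :
    Ypoly (Matrix.diagonal μ) = Matrix.diagonal (fun k => (X:ℂ[X]) + C (μ k)) := by
  ext a b
  by_cases h : a = b
  · subst h; simp [Ypoly, Matrix.diagonal_apply_eq]
  · simp [Ypoly, Matrix.diagonal_apply_ne _ h, h]

lemma det_Ypoly_conj {B R S : Matrix (Fin n) (Fin n) ℂ} {μ : Fin n → ℂ}
    (hRS : R * S = 1) (hB : B = R * Matrix.diagonal μ * S) :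
    ((Ypoly B).det) = ∏ k, ((X:ℂ[X]) + C (μ k)) := by
  have h1 : Ypoly B = (C.mapMatrix R) * Ypoly (Matrix.diagonal μ) * (C.mapMatrix S) := by
    rw [Ypoly_eq, Ypoly_eq]
    rw [Matrix.mul_add, Matrix.add_mul, mul_smul_comm, Matrix.smul_mul]
    congr 1
    · rw [mul_one, ← _root_.map_mul, hRS, _root_.map_one]
    · show B.map C = (C.mapMatrix R) * (C.mapMatrix (Matrix.diagonal μ)) * (C.mapMatrix S)
      rw [← _root_.map_mul, ← _root_.map_mul, hB]
      rfl
  rw [h1, Matrix.det_mul, Matrix.det_mul]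
  have h2 : (C.mapMatrix R).det * (C.mapMatrix S).det = 1 := by
    rw [← RingHom.map_det, ← RingHom.map_det, ← _root_.map_mul, ← Matrix.det_mul, hRS,
      Matrix.det_one, _root_.map_one]
  calc (C.mapMatrix R).det * (Ypoly (Matrix.diagonal μ)).det * (C.mapMatrix S).det
      = (C.mapMatrix R).det * (C.mapMatrix S).det * (Ypoly (Matrix.diagonal μ)).det := by ring
    _ = (Ypoly (Matrix.diagonal μ)).det := by rw [h2, one_mul]
    _ = ∏ k, ((X:ℂ[X]) + C (μ k)) := by rw [Ypoly_diagonal, Matrix.det_diagonal]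

lemma coeff_prod_restrict (μ : Fin n → ℂ) {t : ℕ} (ht : t ≤ n) :
    (∏ k, ((X:ℂ[X]) + C (μ k))).coeff (n - t) =
      ∑ T ∈ Finset.powersetCard t (Finset.univ.filter (fun k => μ k ≠ 0)),
        ∏ k ∈ T, μ k := by
  have hcard : (Finset.univ : Finset (Fin n)).card = n := by simp
  have h := Finset.prod_X_add_C_coeff (Finset.univ : Finset (Fin n)) μ
    (k := n - t) (by omega)
  rw [h]
  have h2 : (Finset.univ : Finset (Fin n)).card - (n - t) = t := by omega
  rw [h2]
  refine (Finset.sum_subset (Finset.powersetCard_mono (Finset.subset_univ _)) ?_).symm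
  intro T hT hT'
  rw [Finset.mem_powersetCard] at hT hT'
  have : ¬ T ⊆ Finset.univ.filter (fun k => μ k ≠ 0) := fun hsub => hT' ⟨hsub, hT.2⟩
  obtain ⟨k, hkT, hk⟩ := Finset.not_subset.mp this
  refine Finset.prod_eq_zero hkT ?_
  have := Finset.mem_filter.not.mp hk
  push_neg at this
  exact this (Finset.mem_univ k)

lemma vanish_scalar (μ : Fin n → ℂ) (r : ℕ)
    (hcard : (Finset.univ.filter (fun k => μ k ≠ 0)).card = r) (k : Fin n) :
    (∑ t ∈ Finset.range (r+1), ((-1:ℂ)^t *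
      (∑ T ∈ Finset.powersetCard (r-t) (Finset.univ.filter (fun k => μ k ≠ 0)),
        ∏ l ∈ T, μ l)) * (μ k)^t) * μ k = 0 := by
  set Sf := Finset.univ.filter (fun k => μ k ≠ 0) with hSf
  by_cases hk : μ k = 0
  · rw [hk, mul_zero]
  · have hkSf : k ∈ Sf := Finset.mem_filter.mpr ⟨Finset.mem_univ k, hk⟩
    set P := ∏ l ∈ Sf, ((X:ℂ[X]) + C (-μ l)) with hP
    have hdeg : P.natDegree < r + 1 := by
      have h1 : ∀ l ∈ Sf, ((X:ℂ[X]) + C (-μ l)).natDegree ≤ 1 := fun l _ =>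
        le_of_eq (Polynomial.natDegree_X_add_C _)
      have h2 : ∑ l ∈ Sf, ((X:ℂ[X]) + C (-μ l)).natDegree ≤ r := by
        calc ∑ l ∈ Sf, ((X:ℂ[X]) + C (-μ l)).natDegree ≤ ∑ l ∈ Sf, 1 :=
          Finset.sum_le_sum h1
        _ = r := by rw [Finset.sum_const, smul_eq_mul, mul_one, hcard]
      have h3 : P.natDegree ≤ r := by
        rw [hP]; exact le_trans (Polynomial.natDegree_prod_le _ _) h2
      omega
    have heval : P.eval (μ k) = 0 := by
      rw [hP, Polynomial.eval_prod]
      refine Finset.prod_eq_zero hkSf ?_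
      simp
    have hcoeff : ∀ t, t ≤ r → P.coeff t =
        (-1:ℂ)^(r-t) * ∑ T ∈ Finset.powersetCard (r-t) Sf, ∏ l ∈ T, μ l := by
      intro t ht
      have h := Finset.prod_X_add_C_coeff Sf (fun l => -μ l) (k := t) (by omega)
      rw [hP, h, hcard, Finset.mul_sum]
      refine Finset.sum_congr rfl fun T hT => ?_
      rw [Finset.mem_powersetCard] at hT
      show ∏ i ∈ T, -μ i = _
      have hneg : ∀ i ∈ T, -μ i = (-1) * μ i := fun i _ => by ring
      rw [Finset.prod_congr rfl hneg, Finset.prod_mul_distrib, Finset.prod_const, hT.2]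
    have hevalsum := Polynomial.eval_eq_sum_range' hdeg (μ k)
    have hsign : ∀ t, t ≤ r → (-1:ℂ)^r * (-1)^(r-t) = (-1)^t := by
      intro t ht
      have hp : (-1:ℂ)^r = (-1)^(r-t) * (-1)^t := by
        rw [← pow_add]; congr 1; omega
      calc (-1:ℂ)^r * (-1)^(r-t) = ((-1)^(r-t) * (-1)^(r-t)) * (-1)^t := by
            rw [hp]; ring
        _ = (-1)^t := by rw [← pow_add, ← two_mul, pow_mul]; norm_num
    have key : ∑ t ∈ Finset.range (r+1), ((-1:ℂ)^t *
        (∑ T ∈ Finset.powersetCard (r-t) Sf, ∏ l ∈ T, μ l)) * (μ k)^t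
        = (-1:ℂ)^r * P.eval (μ k) := by
      rw [hevalsum, Finset.mul_sum]
      refine Finset.sum_congr rfl fun t htr => ?_
      have ht : t ≤ r := by
        have := Finset.mem_range.mp htr; omega
      rw [hcoeff t ht, ← mul_assoc, ← mul_assoc, hsign t ht]
    rw [key, heval, mul_zero, zero_mul]

lemma Bpow_conj {B R S : Matrix (Fin n) (Fin n) ℂ} {μ : Fin n → ℂ}
    (hSR : S * R = 1) (hB : B = R * Matrix.diagonal μ * S) (t : ℕ) :
    B^(t+1) = R * (Matrix.diagonal μ)^(t+1) * S := by
  induction t with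
  | zero => simpa using hB
  | succ t ih =>
    rw [pow_succ, ih]
    conv_lhs => rw [hB]
    calc R * (Matrix.diagonal μ)^(t+1) * S * (R * Matrix.diagonal μ * S)
        = R * ((Matrix.diagonal μ)^(t+1) * ((S * R) * (Matrix.diagonal μ * S))) := by
          simp only [Matrix.mul_assoc]
      _ = R * (Matrix.diagonal μ)^(t+1+1) * S := by
          rw [hSR, one_mul]
          conv_rhs => rw [pow_succ]
          simp only [Matrix.mul_assoc]

lemma key_vanish {B R S : Matrix (Fin n) (Fin n) ℂ} {μ : Fin n → ℂ} {r : ℕ}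
    (hRS : R * S = 1) (hSR : S * R = 1) (hB : B = R * Matrix.diagonal μ * S)
    (hr : r ≤ n) (hcard : (Finset.univ.filter (fun k => μ k ≠ 0)).card = r) :
    (∑ t ∈ Finset.range (r+1), ((-1:ℂ)^t * ((Ypoly B).det).coeff (n - (r - t))) • B^t) * B
      = 0 := by
  have hdet := det_Ypoly_conj hRS hB
  have hcoe : ∀ t, t ≤ r → ((Ypoly B).det).coeff (n - t) =
      ∑ T ∈ Finset.powersetCard t (Finset.univ.filter (fun k => μ k ≠ 0)), ∏ l ∈ T, μ l := by
    intro t ht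
    rw [hdet]; exact coeff_prod_restrict μ (by omega)
  rw [Finset.sum_mul]
  have hterm : ∀ t, (((-1:ℂ)^t * ((Ypoly B).det).coeff (n - (r - t))) • B^t) * B
      = R * (((-1:ℂ)^t * ((Ypoly B).det).coeff (n - (r - t))) • (Matrix.diagonal μ)^(t+1))
        * S := by
    intro t
    rw [smul_mul_assoc, ← pow_succ, Bpow_conj hSR hB t, Matrix.mul_smul, Matrix.smul_mul]
  rw [Finset.sum_congr rfl (fun t _ => hterm t), ← Finset.sum_mul, ← Finset.mul_sum]
  have hinner : (∑ t ∈ Finset.range (r+1),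
      ((-1:ℂ)^t * ((Ypoly B).det).coeff (n - (r - t))) • (Matrix.diagonal μ)^(t+1)) = 0 := by
    ext a b
    rw [Matrix.sum_apply]
    by_cases hab : a = b
    · subst hab
      have hent : ∀ t, (((-1:ℂ)^t * ((Ypoly B).det).coeff (n - (r - t)))
          • (Matrix.diagonal μ)^(t+1)) a a =
          (((-1:ℂ)^t * (∑ T ∈ Finset.powersetCard (r-t)
            (Finset.univ.filter (fun k => μ k ≠ 0)), ∏ l ∈ T, μ l)) * (μ a)^t) * μ a := by
        intro t
        rw [Matrix.smul_apply, Matrix.diagonal_pow, Matrix.diagonal_apply_eq,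
          hcoe (r-t) (by omega)]
        simp only [smul_eq_mul, Pi.mul_apply, Pi.pow_apply, pow_succ]
        ring
      rw [Finset.sum_congr rfl (fun t _ => hent t), ← Finset.sum_mul,
        vanish_scalar μ r hcard a]
      simp
    · have hent : ∀ t, (((-1:ℂ)^t * ((Ypoly B).det).coeff (n - (r - t)))
          • (Matrix.diagonal μ)^(t+1)) a b = 0 := by
        intro t
        rw [Matrix.smul_apply, Matrix.diagonal_pow, Matrix.diagonal_apply_ne _ hab, smul_zero]
      rw [Finset.sum_congr rfl (fun t _ => hent t)]
      simp
  rw [hinner, Matrix.mul_zero, Matrix.zero_mul]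

lemma coeff_nr_eq_prod {B R S : Matrix (Fin n) (Fin n) ℂ} {μ : Fin n → ℂ} {r : ℕ}
    (hRS : R * S = 1) (hB : B = R * Matrix.diagonal μ * S)
    (hr : r ≤ n) (hcard : (Finset.univ.filter (fun k => μ k ≠ 0)).card = r) :
    ((Ypoly B).det).coeff (n - r) =
      ∏ k ∈ Finset.univ.filter (fun k => μ k ≠ 0), μ k := by
  rw [det_Ypoly_conj hRS hB, coeff_prod_restrict μ hr, ← hcard,
    Finset.powersetCard_self, Finset.sum_singleton]

lemma compl_equiv_sum {M : Type*} [AddCommMonoid M] (F : Finset (Fin n) → M) :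
    ∑ s : Finset (Fin n), F s = ∑ β : Finset (Fin n), F βᶜ :=
  (Equiv.sum_comp (Function.Involutive.toPerm _ (fun s : Finset (Fin n) => compl_compl s)) F).symm

lemma coeff_det_Ypoly (B : Matrix (Fin n) (Fin n) ℂ) {r : ℕ} (hr : r ≤ n) :
    ((Ypoly B).det).coeff (n - r) =
      ∑ β ∈ Finset.powersetCard r (Finset.univ : Finset (Fin n)), B.pminor β := by
  have h0 : Ypoly B =
      Matrix.of fun a b => (if a = b then (X:ℂ[X]) else 0) + (B.map C) a b := rfl
  rw [h0, det_diag_add_expand, Polynomial.finset_sum_coeff]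
  have h1 : ∀ s : Finset (Fin n),
      ((∏ a ∈ s, (X:ℂ[X])) * Matrix.det ((B.map C).submatrix (fun x : {x // ¬ x ∈ s} => x.1)
        (fun x : {x // ¬ x ∈ s} => x.1))).coeff (n - r) =
      if n - r = s.card then B.pminor sᶜ else 0 := by
    intro s
    rw [Finset.prod_const, det_submatrix_compl_map, mul_comm, coeff_C_mul, coeff_X_pow]
    simp [mul_ite]
  rw [Finset.sum_congr rfl (fun s _ => h1 s),
    compl_equiv_sum (fun s => if n - r = s.card then B.pminor sᶜ else 0)]
  have h2 : ∀ β : Finset (Fin n),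
      (if n - r = βᶜ.card then B.pminor βᶜᶜ else 0) =
      if β.card = r then B.pminor β else 0 := by
    intro β
    have hc := Finset.card_le_univ β
    rw [compl_compl, Finset.card_compl, Fintype.card_fin]
    rw [Fintype.card_fin] at hc
    congr 1
    simp only [eq_iff_iff]
    omega
  rw [Finset.sum_congr rfl (fun β _ => h2 β), ← Finset.sum_filter]
  congr 1
  ext β
  simp [Finset.mem_powersetCard_univ]

lemma coeff_det_Ypoly_update (B : Matrix (Fin n) (Fin n) ℂ) (c : Fin n → ℂ) (i : Fin n)
    {r : ℕ} (hr : r ≤ n) :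
    (((Ypoly B).updateCol i (fun k => C (c k))).det).coeff (n - r) =
      ∑ β ∈ (Finset.powersetCard r (Finset.univ : Finset (Fin n))).filter (fun β => i ∈ β),
        (B.updateCol i c).pminor β := by
  have h0 : (Ypoly B).updateCol i (fun k => C (c k)) =
      Matrix.of fun a b => (if a = b then (if a = i then 0 else (X:ℂ[X])) else 0) +
        ((B.updateCol i c).map C) a b := by
    ext a b
    by_cases hb : b = i
    · by_cases ha : a = i <;> simp [Matrix.updateCol_apply, hb, ha, Ypoly]
    · by_cases ha : a = b <;> simp [Matrix.updateCol_apply, hb, ha, Ypoly]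
  rw [h0, det_diag_add_expand, Polynomial.finset_sum_coeff]
  have h1 : ∀ s : Finset (Fin n),
      ((∏ a ∈ s, (if a = i then 0 else (X:ℂ[X]))) *
        Matrix.det (((B.updateCol i c).map C).submatrix (fun x : {x // ¬ x ∈ s} => x.1)
        (fun x : {x // ¬ x ∈ s} => x.1))).coeff (n - r) =
      if ¬ i ∈ s ∧ n - r = s.card then (B.updateCol i c).pminor sᶜ else 0 := by
    intro s
    by_cases hi : i ∈ s
    · rw [Finset.prod_eq_zero hi (by simp), zero_mul]
      simp [hi]
    · have : (∏ a ∈ s, (if a = i then 0 else (X:ℂ[X]))) = X ^ s.card := by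
        rw [Finset.prod_congr rfl (fun a ha => if_neg (fun h => hi (by rwa [h] at ha))),
          Finset.prod_const]
      rw [this, det_submatrix_compl_map, mul_comm, coeff_C_mul, coeff_X_pow]
      simp [hi, mul_ite]
  rw [Finset.sum_congr rfl (fun s _ => h1 s), compl_equiv_sum
    (fun s => if ¬ i ∈ s ∧ n - r = s.card then (B.updateCol i c).pminor sᶜ else 0)]
  have h2 : ∀ β : Finset (Fin n),
      (if ¬ i ∈ βᶜ ∧ n - r = βᶜ.card then (B.updateCol i c).pminor βᶜᶜ else 0) =
      if β.card = r ∧ i ∈ β then (B.updateCol i c).pminor β else 0 := by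
    intro β
    have hc : β.card ≤ n := by simpa using Finset.card_le_univ β
    simp only [Finset.mem_compl, not_not, compl_compl, Finset.card_compl, Fintype.card_fin]
    congr 1
    simp only [eq_iff_iff]
    constructor
    · rintro ⟨h, h'⟩; exact ⟨by omega, h⟩
    · rintro ⟨h, h'⟩; exact ⟨h', by omega⟩
  rw [Finset.sum_congr rfl (fun β _ => h2 β), ← Finset.sum_filter]
  congr 1
  ext β
  simp [Finset.mem_powersetCard_univ, and_comm]

/-- Determinantal representation of the weighted Moore–Penrose inverse
`X = A⁺_{M,N}` (characterized by the equations `AXA = A`, `XAX = X`, `(MAX)ᴴ = MAX`,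
`(NXA)ᴴ = NXA`) of an `m × n` complex matrix `A` of rank `r < min m n`, where
`M`, `N` are Hermitian positive definite and `A♯ = N⁻¹AᴴM`. -/
theorem weightedMoorePenrose_entry_det_repr
    (m n r : ℕ) (A : Matrix (Fin m) (Fin n) ℂ) (hA : A.rank = r)
    (hr : r < min m n)
    (M : Matrix (Fin m) (Fin m) ℂ) (N : Matrix (Fin n) (Fin n) ℂ)
    (hM : M.PosDef) (hN : N.PosDef)
    (X : Matrix (Fin n) (Fin m) ℂ)
    (h1 : A * X * A = A) (h2 : X * A * X = X)
    (h3 : (M * A * X)ᴴ = M * A * X) (h4 : (N * X * A)ᴴ = N * X * A)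
    (i : Fin n) (j : Fin m) :
    X i j =
      (∑ β ∈ (Finset.powersetCard r (Finset.univ : Finset (Fin n))).filter
          (fun β => i ∈ β),
        (((N⁻¹ * Aᴴ * M) * A).updateCol i (fun k => (N⁻¹ * Aᴴ * M) k j)).pminor β) /
      (∑ β ∈ Finset.powersetCard r (Finset.univ : Finset (Fin n)),
        ((N⁻¹ * Aᴴ * M) * A).pminor β) := by
  have hrn : r < n := lt_of_lt_of_le hr (min_le_right m n)
  set Ash : Matrix (Fin n) (Fin m) ℂ := N⁻¹ * Aᴴ * M with hAshdef
  set B : Matrix (Fin n) (Fin n) ℂ := Ash * A with hBdef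
  -- invertibility facts
  have hNdet : IsUnit N.det := (Matrix.isUnit_iff_isUnit_det N).mp hN.isUnit
  have hNidet : IsUnit (N⁻¹).det := Matrix.isUnit_nonsing_inv_det N hNdet
  set T : Matrix (Fin n) (Fin n) ℂ := open scoped MatrixOrder in CFC.sqrt N with hTdef
  have hTT : T * T = N := open scoped MatrixOrder in CFC.sqrt_mul_sqrt_self N hN.posSemidef.nonneg
  have hTH : Tᴴ = T := open scoped MatrixOrder in (CFC.sqrt_nonneg N).posSemidef.1
  have hTdet : IsUnit T.det := by
    have hd : T.det * T.det = N.det := by rw [← Matrix.det_mul, hTT]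
    exact isUnit_of_mul_isUnit_left (hd ▸ hNdet)
  have hTidet : IsUnit (T⁻¹).det := Matrix.isUnit_nonsing_inv_det T hTdet
  set S0 : Matrix (Fin m) (Fin m) ℂ := open scoped MatrixOrder in CFC.sqrt M with hS0def
  have hS0S0 : S0 * S0 = M := open scoped MatrixOrder in CFC.sqrt_mul_sqrt_self M hM.posSemidef.nonneg
  have hS0H : S0ᴴ = S0 := open scoped MatrixOrder in (CFC.sqrt_nonneg M).posSemidef.1
  have hMdet : IsUnit M.det := (Matrix.isUnit_iff_isUnit_det M).mp hM.isUnit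
  have hS0det : IsUnit S0.det := by
    have hd : S0.det * S0.det = M.det := by rw [← Matrix.det_mul, hS0S0]
    exact isUnit_of_mul_isUnit_left (hd ▸ hMdet)
  -- rank facts
  have hK : Aᴴ * M * A = (S0 * A)ᴴ * (S0 * A) := by
    calc Aᴴ * M * A = Aᴴ * (S0 * S0) * A := by rw [hS0S0]
      _ = (S0 * A)ᴴ * (S0 * A) := by
          rw [Matrix.conjTranspose_mul, hS0H]
          simp only [Matrix.mul_assoc]
  have hrankK : (Aᴴ * M * A).rank = r := by
    rw [hK, Matrix.rank_conjTranspose_mul_self,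
      Matrix.rank_mul_eq_right_of_isUnit_det S0 A hS0det, hA]
  have hB' : B = N⁻¹ * (Aᴴ * M * A) := by
    rw [hBdef, hAshdef]; simp only [Matrix.mul_assoc]
  have hrankB : B.rank = r := by
    rw [hB', Matrix.rank_mul_eq_right_of_isUnit_det _ _ hNidet, hrankK]
  have hrankQ : (X * A).rank = r := by
    have h1' : A * (X * A) = A := by rw [← Matrix.mul_assoc, h1]
    refine le_antisymm ?_ ?_
    · rw [← hA]; exact Matrix.rank_mul_le_right X A
    · conv_lhs => rw [← hA, ← h1']
      exact Matrix.rank_mul_le_right A (X * A)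
  -- Penrose consequences
  have hAconj : Aᴴ * Xᴴ * Aᴴ = Aᴴ := by
    have := congrArg Matrix.conjTranspose h1
    simp only [Matrix.conjTranspose_mul] at this
    simpa only [Matrix.mul_assoc] using this
  have hBX : B * X = Ash := by
    have e3 : M * A * X = Xᴴ * Aᴴ * M := by
      conv_lhs => rw [← h3]
      simp only [Matrix.conjTranspose_mul, hM.1.eq, Matrix.mul_assoc]
    have key2 : Aᴴ * (M * A * X) = Aᴴ * M := by
      rw [e3]
      calc Aᴴ * (Xᴴ * Aᴴ * M) = (Aᴴ * Xᴴ * Aᴴ) * M := by simp only [Matrix.mul_assoc]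
        _ = Aᴴ * M := by rw [hAconj]
    rw [hBdef, hAshdef]
    calc N⁻¹ * Aᴴ * M * A * X = N⁻¹ * (Aᴴ * (M * A * X)) := by simp only [Matrix.mul_assoc]
      _ = N⁻¹ * (Aᴴ * M) := by rw [key2]
      _ = N⁻¹ * Aᴴ * M := by simp only [Matrix.mul_assoc]
  have hQB : (X * A) * B = B := by
    have e1 : N * X * A = Aᴴ * Xᴴ * N := by
      conv_lhs => rw [← h4]
      simp only [Matrix.conjTranspose_mul, hN.1.eq, Matrix.mul_assoc]
    have e2 : X * A = N⁻¹ * (Aᴴ * Xᴴ * N) := by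
      rw [← e1]
      calc X * A = (N⁻¹ * N) * (X * A) := by rw [Matrix.nonsing_inv_mul N hNdet, Matrix.one_mul]
        _ = N⁻¹ * (N * X * A) := by simp only [Matrix.mul_assoc]
    rw [e2, hB']
    calc N⁻¹ * (Aᴴ * Xᴴ * N) * (N⁻¹ * (Aᴴ * M * A))
        = N⁻¹ * (Aᴴ * (Xᴴ * ((N * N⁻¹) * (Aᴴ * (M * A))))) := by simp only [Matrix.mul_assoc]
      _ = N⁻¹ * (Aᴴ * (Xᴴ * (Aᴴ * (M * A)))) := by
          rw [Matrix.mul_nonsing_inv N hNdet, Matrix.one_mul]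
      _ = N⁻¹ * ((Aᴴ * Xᴴ * Aᴴ) * (M * A)) := by simp only [Matrix.mul_assoc]
      _ = N⁻¹ * (Aᴴ * M * A) := by rw [hAconj]; simp only [Matrix.mul_assoc]
  -- spectral setup
  set Cm : Matrix (Fin n) (Fin n) ℂ := T⁻¹ * (Aᴴ * M * A) * T⁻¹ with hCmdef
  have hTiH : (T⁻¹)ᴴ = T⁻¹ := by rw [Matrix.conjTranspose_nonsing_inv, hTH]
  have hNinv : N⁻¹ = T⁻¹ * T⁻¹ := by rw [← hTT, Matrix.mul_inv_rev]
  have hBC : B = T⁻¹ * Cm * T := by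
    rw [hCmdef]
    calc B = N⁻¹ * (Aᴴ * M * A) := hB'
      _ = T⁻¹ * T⁻¹ * (Aᴴ * M * A) * (T⁻¹ * T) := by
          rw [Matrix.nonsing_inv_mul T hTdet, hNinv]
          simp only [Matrix.mul_assoc, Matrix.mul_one]
      _ = T⁻¹ * (T⁻¹ * (Aᴴ * M * A) * T⁻¹) * T := by simp only [Matrix.mul_assoc]
  have hCmPSD : Cm.PosSemidef := by
    have hform : Cm = (S0 * A * T⁻¹)ᴴ * (S0 * A * T⁻¹) := by
      rw [hCmdef, hK]
      simp only [Matrix.conjTranspose_mul, hTiH, hS0H, Matrix.mul_assoc]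
    rw [hform]
    exact Matrix.posSemidef_conjTranspose_mul_self _
  have hrankCm : Cm.rank = r := by
    rw [hCmdef, Matrix.rank_mul_eq_left_of_isUnit_det _ _ hTidet,
      Matrix.rank_mul_eq_right_of_isUnit_det _ _ hTidet, hrankK]
  set hH := hCmPSD.1 with hHdef
  set U : Matrix (Fin n) (Fin n) ℂ := (hH.eigenvectorUnitary : Matrix (Fin n) (Fin n) ℂ)
    with hUdef
  set μ : Fin n → ℂ := fun k => (RCLike.ofReal (hH.eigenvalues k) : ℂ) with hμdef
  have hUU : U * star U = 1 := (Matrix.mem_unitaryGroup_iff).mp hH.eigenvectorUnitary.2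
  have hUU' : star U * U = 1 := (Matrix.mem_unitaryGroup_iff').mp hH.eigenvectorUnitary.2
  have hspec : Cm = U * Matrix.diagonal μ * star U := by
    rw [hμdef]
    exact hH.spectral_theorem
  set R : Matrix (Fin n) (Fin n) ℂ := T⁻¹ * U with hRdef
  set S : Matrix (Fin n) (Fin n) ℂ := star U * T with hSdef
  have hRS : R * S = 1 := by
    rw [hRdef, hSdef]
    calc T⁻¹ * U * (star U * T) = T⁻¹ * ((U * star U) * T) := by simp only [Matrix.mul_assoc]
      _ = 1 := by rw [hUU, Matrix.one_mul, Matrix.nonsing_inv_mul T hTdet]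
  have hSR : S * R = 1 := by
    rw [hRdef, hSdef]
    calc star U * T * (T⁻¹ * U) = star U * ((T * T⁻¹) * U) := by simp only [Matrix.mul_assoc]
      _ = 1 := by rw [Matrix.mul_nonsing_inv T hTdet, Matrix.one_mul, hUU']
  have hBRS : B = R * Matrix.diagonal μ * S := by
    rw [hRdef, hSdef, hBC, hspec]
    simp only [Matrix.mul_assoc]
  have hcard : (Finset.univ.filter (fun k => μ k ≠ 0)).card = r := by
    have hfil : Finset.univ.filter (fun k => μ k ≠ 0) =
        Finset.univ.filter (fun k => hH.eigenvalues k ≠ 0) := by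
      refine Finset.filter_congr fun k _ => ?_
      rw [hμdef]
      simp [RCLike.ofReal_eq_zero]
    rw [hfil, ← Fintype.card_subtype, ← hH.rank_eq_card_non_zero_eigs, hrankCm]
  -- the scalar e_r and its nonvanishing
  set er : ℂ := ((Ypoly B).det).coeff (n - r) with herdef
  have hDen : (∑ β ∈ Finset.powersetCard r (Finset.univ : Finset (Fin n)), B.pminor β)
      = er := (coeff_det_Ypoly B hrn.le).symm
  have hDnz : er ≠ 0 := by
    rw [herdef, coeff_nr_eq_prod hRS hBRS hrn.le hcard]
    exact Finset.prod_ne_zero_iff.mpr (fun k hk => (Finset.mem_filter.mp hk).2)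
  -- F and E
  have hFB : Gmat B (n - 1 - r) * B = 0 := by
    rw [Gmat_closed B r (by omega)]
    exact key_vanish hRS hSR hBRS hrn.le hcard
  -- F kills X*A
  have hFQ : Gmat B (n - 1 - r) * (X * A) = 0 := by
    have hrange : LinearMap.range B.mulVecLin = LinearMap.range (X * A).mulVecLin := by
      have hle : LinearMap.range B.mulVecLin ≤ LinearMap.range (X * A).mulVecLin := by
        conv_lhs => rw [← hQB]
        rw [Matrix.mulVecLin_mul]
        exact LinearMap.range_comp_le_range _ _
      refine Submodule.eq_of_le_of_finrank_le hle ?_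
      show ((X * A).rank : ℕ) ≤ B.rank
      rw [hrankQ, hrankB]
    have hcols : ∀ v : Fin n → ℂ, ∃ w, (X * A) *ᵥ v = B *ᵥ w := by
      intro v
      have hv : (X * A).mulVecLin v ∈ LinearMap.range B.mulVecLin := by
        rw [hrange]; exact LinearMap.mem_range_self _ v
      obtain ⟨w, hw⟩ := hv
      exact ⟨w, by simpa [Matrix.mulVecLin_apply] using hw.symm⟩
    ext a b
    obtain ⟨w, hw⟩ := hcols (Pi.single b 1)
    have hz : (Gmat B (n - 1 - r) * (X * A)) *ᵥ Pi.single b 1 = 0 := by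
      rw [← Matrix.mulVec_mulVec, hw, Matrix.mulVec_mulVec, hFB, Matrix.zero_mulVec]
    have := congrFun hz a
    rw [Matrix.mulVec_single] at this
    simpa using this
  have hFX : Gmat B (n - 1 - r) * X = 0 := by
    conv_lhs => rw [← h2]
    rw [← Matrix.mul_assoc, hFQ, Matrix.zero_mul]
  -- recurrence: F + E * B = er • 1
  have hrec := Gmat_recurrence B (d := n - r) (by omega)
  have hidx : n - r - 1 = n - 1 - r := by omega
  rw [hidx] at hrec
  -- main identity: E * Ash = er • X
  have hmain : Gmat B (n - r) * Ash = er • X := by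
    have := congrArg (fun Z => Z * X) hrec
    simp only [Matrix.add_mul] at this
    rw [hFX, zero_add, Matrix.mul_assoc, hBX, Matrix.smul_mul, Matrix.one_mul]
      at this
    exact this
  -- numerator
  have hNum : (∑ β ∈ (Finset.powersetCard r (Finset.univ : Finset (Fin n))).filter
      (fun β => i ∈ β), (B.updateCol i (fun k => Ash k j)).pminor β) = er * X i j := by
    rw [← coeff_det_Ypoly_update B (fun k => Ash k j) i hrn.le]
    have hcram : ((Ypoly B).updateCol i (fun k => C (Ash k j))).det =
        ((Ypoly B).adjugate *ᵥ (fun k => C (Ash k j))) i := by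
      rw [← Matrix.cramer_eq_adjugate_mulVec]
      exact (Matrix.cramer_apply _ _ _).symm
    rw [hcram]
    have hmv : ((Ypoly B).adjugate *ᵥ (fun k => C (Ash k j))) i =
        ∑ k, (Ypoly B).adjugate i k * C (Ash k j) := rfl
    rw [hmv, Polynomial.finset_sum_coeff]
    have hterm : ∀ k, ((Ypoly B).adjugate i k * C (Ash k j)).coeff (n - r) =
        Gmat B (n - r) i k * Ash k j := by
      intro k
      rw [mul_comm, Polynomial.coeff_C_mul, mul_comm]
      rfl
    rw [Finset.sum_congr rfl (fun k _ => hterm k), ← Matrix.mul_apply, hmain]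
    simp
  rw [hNum, hDen, mul_comm, mul_div_assoc, div_self hDnz, mul_one]
end

section
/- Let A ∈ ℂ^{n×n} and k = Ind A. Then A^D = lim_{λ→0⁺} A^k (λ I_n + A^{k+1})^{−1}, where the limit is taken as the real parameter λ tends to 0 from the right (for all sufficiently small λ > 0 the matrix λI_n + A^{k+1} is invertible). -/
open Matrix

/-- Limit representation of the Drazin inverse: if `k = Ind A` (the least
`k` with `rank A^{k+1} = rank A^k`) and `X = A^D` is the Drazin inverse of `A`
(characterized by `A^{k+1} X = A^k`, `XAX = X`, `AX = XA`), then for all sufficiently small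
real `λ > 0` the matrix `λI_n + A^{k+1}` is invertible, and
`A^k (λ I_n + A^{k+1})⁻¹ → A^D` as `λ → 0⁺`. -/
theorem drazinInverse_limit_repr
    (n k : ℕ) (A : Matrix (Fin n) (Fin n) ℂ)
    (hk : IsLeast {j : ℕ | (A ^ (j + 1)).rank = (A ^ j).rank} k)
    (X : Matrix (Fin n) (Fin n) ℂ)
    (h1 : A ^ (k + 1) * X = A ^ k) (h2 : X * A * X = X) (h3 : A * X = X * A) :
    (∀ᶠ lam : ℝ in nhdsWithin 0 (Set.Ioi 0),
        IsUnit ((lam : ℂ) • (1 : Matrix (Fin n) (Fin n) ℂ) + A ^ (k + 1))) ∧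
    Filter.Tendsto
      (fun lam : ℝ =>
        A ^ k * ((lam : ℂ) • (1 : Matrix (Fin n) (Fin n) ℂ) + A ^ (k + 1))⁻¹)
      (nhdsWithin 0 (Set.Ioi 0)) (nhds X) := by
  classical
  have hcomm : Commute A X := h3
  set C : Matrix (Fin n) (Fin n) ℂ := A * X with hCdef
  set D : Matrix (Fin n) (Fin n) ℂ := X ^ (k + 1) with hDdef
  -- basic algebraic identities
  have hidem : IsIdempotentElem C := by
    show A * X * (A * X) = A * X
    rw [mul_assoc, ← mul_assoc X A X, h2]
  have hCX : C * X = X := by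
    show A * X * X = X
    rw [hcomm.eq]; exact h2
  have hBC : A ^ (k + 1) * C = A ^ (k + 1) := by
    show A ^ (k + 1) * (A * X) = A ^ (k + 1)
    rw [← mul_assoc, ← pow_succ, pow_succ' A (k + 1), mul_assoc, h1, ← pow_succ']
  have hAkC : A ^ k * C = A ^ k := by
    show A ^ k * (A * X) = A ^ k
    rw [← mul_assoc, ← pow_succ, h1]
  have hBD : A ^ (k + 1) * D = C := by
    show A ^ (k + 1) * X ^ (k + 1) = C
    rw [← hcomm.mul_pow, hidem.pow_succ_eq]
  have hDC : D * C = D := by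
    show X ^ (k + 1) * (A * X) = X ^ (k + 1)
    rw [pow_succ, mul_assoc, ← mul_assoc X A X, h2, ← pow_succ]
  have hCD : C * D = D := by
    have hc : Commute C D :=
      Commute.mul_left (hcomm.pow_right (k + 1)) ((Commute.refl X).pow_right (k + 1))
    exact hc.eq.trans hDC
  have hAkD : A ^ k * D = X := by
    rcases k with _ | m
    · show A ^ 0 * X ^ 1 = X
      simp
    · show A ^ (m + 1) * X ^ (m + 1 + 1) = X
      rw [pow_succ X (m + 1), ← mul_assoc, ← hcomm.mul_pow, hidem.pow_succ_eq, hCX]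
  have hB1C : A ^ (k + 1) * ((1 : Matrix (Fin n) (Fin n) ℂ) - C) = 0 := by
    rw [mul_sub, mul_one, hBC, sub_self]
  have hAk1C : A ^ k * ((1 : Matrix (Fin n) (Fin n) ℂ) - C) = 0 := by
    rw [mul_sub, mul_one, hAkC, sub_self]
  -- the auxiliary family u lam = 1 + lam • D
  set u : ℝ → Matrix (Fin n) (Fin n) ℂ :=
    fun lam => (1 : Matrix (Fin n) (Fin n) ℂ) + (lam : ℂ) • D with hudef
  have hu_cont : Continuous u :=
    continuous_const.add ((Complex.continuous_ofReal).smul continuous_const)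
  have hu0 : u 0 = 1 := by simp [hudef]
  -- eventually u lam is a unit
  have hu_unit : ∀ᶠ lam : ℝ in nhds 0, IsUnit (u lam) := by
    have hdc : ContinuousAt (fun lam : ℝ => (u lam).det) 0 :=
      (hu_cont.matrix_det).continuousAt
    have hne : (fun lam : ℝ => (u lam).det) 0 ≠ 0 := by simp [hu0]
    filter_upwards [hdc.eventually_ne hne] with lam hlam
    exact (isUnit_iff_isUnit_det _).mpr (isUnit_iff_ne_zero.mpr hlam)
  -- main pointwise computation
  have main : ∀ lam : ℝ, lam ≠ 0 → IsUnit (u lam) →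
      IsUnit ((lam : ℂ) • (1 : Matrix (Fin n) (Fin n) ℂ) + A ^ (k + 1)) ∧
      A ^ k * ((lam : ℂ) • (1 : Matrix (Fin n) (Fin n) ℂ) + A ^ (k + 1))⁻¹
        = X * (u lam)⁻¹ := by
    intro lam hlam hu
    have hl : (lam : ℂ) ≠ 0 := by exact_mod_cast hlam
    have hudet : IsUnit (u lam).det := (isUnit_iff_isUnit_det _).mp hu
    have huu : u lam * (u lam)⁻¹ = 1 := mul_nonsing_inv _ hudet
    have huu' : (u lam)⁻¹ * u lam = 1 := nonsing_inv_mul _ hudet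
    set v : Matrix (Fin n) (Fin n) ℂ := (u lam)⁻¹ with hvdef
    have hCu : C * u lam = u lam * C := by
      simp [hudef, mul_add, add_mul, mul_smul_comm, smul_mul_assoc, hCD, hDC]
    have hCv : C * v = v * C := by
      calc C * v = (v * u lam) * (C * v) := by rw [huu', one_mul]
        _ = v * ((u lam * C) * v) := by simp [mul_assoc]
        _ = v * ((C * u lam) * v) := by rw [hCu]
        _ = (v * C) * (u lam * v) := by simp [mul_assoc]
        _ = v * C := by rw [huu, mul_one]
    set Z : Matrix (Fin n) (Fin n) ℂ :=
      ((lam : ℂ)⁻¹) • ((1 : Matrix (Fin n) (Fin n) ℂ) - C) + D * v with hZdef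
    have huC : u lam * C = (lam : ℂ) • D + C := by
      simp [hudef, add_mul, smul_mul_assoc, hDC, add_comm]
    have key : ((lam : ℂ) • (1 : Matrix (Fin n) (Fin n) ℂ) + A ^ (k + 1)) * Z = 1 := by
      have hs : (lam : ℂ) * (lam : ℂ)⁻¹ = 1 := mul_inv_cancel₀ hl
      have e1 : ((lam : ℂ) • (1 : Matrix (Fin n) (Fin n) ℂ)) * Z = (lam : ℂ) • Z := by
        rw [smul_mul_assoc, one_mul]
      have e2 : (lam : ℂ) • Z = ((1 : Matrix (Fin n) (Fin n) ℂ) - C) + ((lam : ℂ) • D) * v := by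
        rw [hZdef, smul_add, smul_smul, hs, one_smul, smul_mul_assoc]
      have e3 : A ^ (k + 1) * Z = C * v := by
        rw [hZdef, mul_add, mul_smul_comm, hB1C, smul_zero, zero_add, ← mul_assoc, hBD]
      rw [add_mul, e1, e2, e3]
      calc ((1 : Matrix (Fin n) (Fin n) ℂ) - C) + ((lam : ℂ) • D) * v + C * v
          = ((1 : Matrix (Fin n) (Fin n) ℂ) - C) + (((lam : ℂ) • D) + C) * v := by
            rw [add_mul, add_assoc]
        _ = ((1 : Matrix (Fin n) (Fin n) ℂ) - C) + (u lam * C) * v := by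
            rw [huC, add_comm ((lam : ℂ) • D) C]
        _ = ((1 : Matrix (Fin n) (Fin n) ℂ) - C) + u lam * (v * C) := by
            rw [mul_assoc, hCv]
        _ = ((1 : Matrix (Fin n) (Fin n) ℂ) - C) + C := by
            rw [← mul_assoc, huu, one_mul]
        _ = 1 := by rw [sub_add_cancel]
    have hMunit : IsUnit ((lam : ℂ) • (1 : Matrix (Fin n) (Fin n) ℂ) + A ^ (k + 1)) := by
      apply (isUnit_iff_isUnit_det _).mpr
      have := congrArg Matrix.det key
      rw [det_mul, det_one] at this
      exact isUnit_iff_exists_inv.mpr ⟨_, this⟩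
    refine ⟨hMunit, ?_⟩
    rw [inv_eq_right_inv key, hZdef, mul_add, mul_smul_comm, hAk1C, smul_zero, zero_add,
      ← mul_assoc, hAkD]
  constructor
  · filter_upwards [self_mem_nhdsWithin, (nhdsWithin_le_nhds hu_unit :)] with lam hmem hu
    exact (main lam (ne_of_gt hmem) hu).1
  · have hlim : Filter.Tendsto (fun lam : ℝ => X * (u lam)⁻¹) (nhds 0) (nhds X) := by
      have hinv : ContinuousAt Inv.inv (u 0) := by
        apply continuousAt_matrix_inv
        rw [hu0, det_one]
        have := NormedRing.inverse_continuousAt (1 : ℂˣ)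
        exact this
      have h1' : ContinuousAt (fun lam : ℝ => (u lam)⁻¹) 0 := hinv.comp hu_cont.continuousAt
      have h2' : ContinuousAt (fun lam : ℝ => X * (u lam)⁻¹) 0 :=
        (continuousAt_const.mul h1' :)
      have := h2'.tendsto
      simpa [hu0] using this
    refine Filter.Tendsto.congr' ?_ (hlim.mono_left nhdsWithin_le_nhds)
    filter_upwards [self_mem_nhdsWithin, (nhdsWithin_le_nhds hu_unit :)] with lam hmem hu
    exact ((main lam (ne_of_gt hmem) hu).2).symm
end

section
/- Let A ∈ ℂ^{n×n} with Ind A = k. Then for all i, j ∈ {1,…,n}, the matrix A^{k+1}_{i.}(a^{(k)}_{j.}), obtained from A^{k+1} by replacing its i-th row with the j-th row of A^k, has rank at most rank A^{k+1}. -/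
open Matrix

/-- If `A ∈ ℂ^{n×n}` with `Ind A = k` (the least `k` with
`rank A^{k+1} = rank A^k`), then for all `i, j`, the matrix obtained from `A^{k+1}` by
replacing its `i`-th row with the `j`-th row of `A^k` has rank at most `rank A^{k+1}`. -/
theorem rank_updateRow_pow_succ_le
    (n k : ℕ) (A : Matrix (Fin n) (Fin n) ℂ)
    (hk : IsLeast {j : ℕ | (A ^ (j + 1)).rank = (A ^ j).rank} k)
    (i j : Fin n) :
    ((A ^ (k + 1)).updateRow i (fun l => (A ^ k) j l)).rank ≤ (A ^ (k + 1)).rank := by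
  classical
  set S : Submodule ℂ (Fin n → ℂ) := Submodule.span ℂ (Set.range (A ^ (k + 1)))
  set T : Submodule ℂ (Fin n → ℂ) := Submodule.span ℂ (Set.range (A ^ k))
  have hST : S ≤ T := by
    apply Submodule.span_le.2
    rintro _ ⟨r, rfl⟩
    have : (A ^ (k + 1)) r = ∑ l, A r l • (A ^ k) l := by
      funext c
      rw [pow_succ']
      simp [Matrix.mul_apply, Finset.sum_apply]
    rw [this]
    exact Submodule.sum_mem _ fun l _ =>
      Submodule.smul_mem _ _ (Submodule.subset_span ⟨l, rfl⟩)
  have hrank : (A ^ (k + 1)).rank = (A ^ k).rank := hk.1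
  have hfin : Module.finrank ℂ S = Module.finrank ℂ T := by
    exact (Matrix.rank_eq_finrank_span_row _).symm.trans
      (hrank.trans (Matrix.rank_eq_finrank_span_row _))
  have hSeT : S = T := Submodule.eq_of_le_of_finrank_eq hST hfin
  have hsub : Set.range ((A ^ (k + 1)).updateRow i (fun l => (A ^ k) j l)) ⊆ S := by
    rintro _ ⟨r, rfl⟩
    by_cases hr : r = i
    · subst hr
      rw [Matrix.updateRow_self]
      rw [hSeT]
      exact Submodule.subset_span ⟨j, rfl⟩
    · rw [Matrix.updateRow_ne hr]
      exact Submodule.subset_span ⟨r, rfl⟩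
  calc ((A ^ (k + 1)).updateRow i (fun l => (A ^ k) j l)).rank
      = Module.finrank ℂ (Submodule.span ℂ
          (Set.range ((A ^ (k + 1)).updateRow i (fun l => (A ^ k) j l)))) :=
        Matrix.rank_eq_finrank_span_row _
    _ ≤ Module.finrank ℂ S := Submodule.finrank_mono (Submodule.span_le.2 hsub)
    _ = (A ^ (k + 1)).rank := (Matrix.rank_eq_finrank_span_row _).symm
end

section
/- Let A ∈ ℂ^{n×n}, let k ≥ 1 be an integer, and let λ ∈ ℝ. Then for all i, j ∈ {1,…,n}, det((λI_n + A^{k+1})_{j.}(a^{(k)}_{i.})) = r₁^{(ij)} λ^{n−1} + r₂^{(ij)} λ^{n−2} + … + r_n^{(ij)}, where r_s^{(ij)} = Σ_{α ∈ I_{s,n}{j}} |((A^{k+1}_{j.}(a^{(k)}_{i.}))_α^α| for s = 1,…,n−1 and r_n^{(ij)} = det(A^{k+1}_{j.}(a^{(k)}_{i.})). -/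
open Matrix

/-- det of the matrix whose rows in `s` are standard basis vectors equals
the principal minor of `C` on `sᶜ`. -/
lemma det_piecewise_single_s10 {n : ℕ} (C : Matrix (Fin n) (Fin n) ℂ) (s : Finset (Fin n)) :
    Matrix.det (Matrix.of fun l => if l ∈ s then (Pi.single l 1 : Fin n → ℂ) else C l)
      = C.pminor sᶜ := by
  classical
  let e : {a // a ∈ s} ⊕ {a // ¬ a ∈ s} ≃ Fin n := Equiv.sumCompl _
  rw [← Matrix.det_submatrix_equiv_self e]
  have hb : (Matrix.of fun l => if l ∈ s then (Pi.single l 1 : Fin n → ℂ) else C l).submatrix e e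
      = Matrix.fromBlocks 1 0
          (C.submatrix (fun a : {a // ¬ a ∈ s} => (a : Fin n)) (fun a : {a // a ∈ s} => (a : Fin n)))
          (C.submatrix (fun a : {a // ¬ a ∈ s} => (a : Fin n)) (fun a : {a // ¬ a ∈ s} => (a : Fin n))) := by
    ext a b
    cases a with
    | inl a =>
      cases b with
      | inl b =>
        simp only [e, Matrix.submatrix_apply, Matrix.of_apply, Equiv.sumCompl_apply_inl,
          Matrix.fromBlocks_apply₁₁, a.2, if_true, Matrix.one_apply, Pi.single_apply, Subtype.ext_iff]
        grind
      | inr b =>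
        have : (b : Fin n) ≠ (a : Fin n) := by
          intro h; exact b.2 (h ▸ a.2)
        simp [e, Matrix.fromBlocks, Pi.single_apply, a.2, this]
    | inr a =>
      cases b with
      | inl b => simp [e, Matrix.fromBlocks, a.2]
      | inr b => simp [e, Matrix.fromBlocks, a.2]
  rw [hb, Matrix.det_fromBlocks_zero₁₂, Matrix.det_one, one_mul, Matrix.pminor]
  let e2 : {x // x ∈ sᶜ} ≃ {x // ¬ x ∈ s} :=
    Equiv.subtypeEquivRight (fun x => Finset.mem_compl)
  rw [← Matrix.det_submatrix_equiv_self e2]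
  rfl

lemma det_diagonal_add {n : ℕ} (d : Fin n → ℂ) (C : Matrix (Fin n) (Fin n) ℂ) :
    (Matrix.diagonal d + C).det
      = ∑ s : Finset (Fin n), (∏ l ∈ s, d l) * C.pminor sᶜ := by
  classical
  have hrows : Matrix.diagonal d + C
      = Matrix.of ((fun l => Pi.single l (d l)) + fun l => C l) := by
    ext l m
    by_cases h : l = m <;>
      simp [Matrix.diagonal_apply, Pi.single_apply, h, eq_comm]
  rw [hrows]
  show (Matrix.detRowAlternating : (Fin n → ℂ) [⋀^Fin n]→ₗ[ℂ] ℂ).toMultilinearMap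
      ((fun l => Pi.single l (d l)) + fun l => C l) = _
  rw [MultilinearMap.map_add_univ]
  refine Finset.sum_congr rfl fun s _ => ?_
  have h1 : s.piecewise (fun l => Pi.single l (d l)) (fun l => C l)
      = s.piecewise (fun l => d l • (s.piecewise (fun l => (Pi.single l 1 : Fin n → ℂ)) (fun l => C l)) l)
          (s.piecewise (fun l => (Pi.single l 1 : Fin n → ℂ)) (fun l => C l)) := by
    ext l m
    by_cases h : l ∈ s <;> simp [Finset.piecewise, h, Pi.single_apply]
  rw [h1, MultilinearMap.map_piecewise_smul]
  have h2 : (Matrix.detRowAlternating : (Fin n → ℂ) [⋀^Fin n]→ₗ[ℂ] ℂ).toMultilinearMap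
      (s.piecewise (fun l => (Pi.single l 1 : Fin n → ℂ)) (fun l => C l)) = C.pminor sᶜ := by
    rw [← det_piecewise_single_s10 C s]
    congr 1
  rw [h2, smul_eq_mul]

/-- For `A ∈ ℂ^{n×n}`, `k ≥ 1` and `λ ∈ ℝ`, for all `i, j`,
`det((λI_n + A^{k+1})_{j.}(a^{(k)}_{i.})) = r₁ λ^{n-1} + ⋯ + r_n`, where
`r_s = Σ_{α ∈ I_{s,n}{j}} |(A^{k+1}_{j.}(a^{(k)}_{i.}))_α^α|` (for `s = n` this sum is the
single principal minor over all indices, i.e. `det(A^{k+1}_{j.}(a^{(k)}_{i.}))`). -/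
theorem det_smul_one_add_pow_succ_updateRow
    (n k : ℕ) (hk : 1 ≤ k) (A : Matrix (Fin n) (Fin n) ℂ) (lam : ℝ) (i j : Fin n) :
    (((lam : ℂ) • (1 : Matrix (Fin n) (Fin n) ℂ) + A ^ (k + 1)).updateRow j
        (fun l => (A ^ k) i l)).det =
      ∑ s ∈ Finset.Icc 1 n,
        (∑ α ∈ (Finset.powersetCard s (Finset.univ : Finset (Fin n))).filter
            (fun α => j ∈ α),
          ((A ^ (k + 1)).updateRow j (fun l => (A ^ k) i l)).pminor α) *
          (lam : ℂ) ^ (n - s) := by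
  classical
  set C : Matrix (Fin n) (Fin n) ℂ := (A ^ (k + 1)).updateRow j (fun l => (A ^ k) i l) with hC
  set d : Fin n → ℂ := fun l => if l = j then 0 else (lam : ℂ) with hd
  have hN : ((lam : ℂ) • (1 : Matrix (Fin n) (Fin n) ℂ) + A ^ (k + 1)).updateRow j
      (fun l => (A ^ k) i l) = Matrix.diagonal d + C := by
    ext l m
    by_cases h : l = j
    · subst h
      simp [hd, hC, Matrix.diagonal_apply, Matrix.updateRow_self]
    · by_cases h2 : l = m
      · subst h2
        simp [hd, hC, Matrix.updateRow_ne h, Matrix.one_apply, h]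
      · simp [hd, hC, Matrix.updateRow_ne h, Matrix.one_apply, h, h2]
  rw [hN, det_diagonal_add]
  -- reindex by complement
  have hreix : ∑ s : Finset (Fin n), (∏ l ∈ s, d l) * C.pminor sᶜ
      = ∑ β : Finset (Fin n), (∏ l ∈ βᶜ, d l) * C.pminor β := by
    refine Fintype.sum_bijective (Compl.compl : Finset (Fin n) → Finset (Fin n)) compl_involutive.bijective _ _ fun β => ?_
    rw [compl_compl]
  rw [hreix]
  have hprod : ∀ β : Finset (Fin n),
      (∏ l ∈ βᶜ, d l) = if j ∈ β then (lam : ℂ) ^ (n - β.card) else 0 := by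
    intro β
    by_cases h : j ∈ β
    · rw [if_pos h]
      have : ∀ l ∈ βᶜ, d l = (lam : ℂ) := by
        intro l hl
        have : l ≠ j := fun hlj => (Finset.mem_compl.mp hl) (hlj ▸ h)
        simp [hd, this]
      rw [Finset.prod_congr rfl this, Finset.prod_const, Finset.card_compl,
        Fintype.card_fin]
    · rw [if_neg h]
      exact Finset.prod_eq_zero (Finset.mem_compl.mpr h) (by simp [hd])
  have hsum : ∑ β : Finset (Fin n), (∏ l ∈ βᶜ, d l) * C.pminor β
      = ∑ β ∈ Finset.univ.filter (fun β : Finset (Fin n) => j ∈ β),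
          (lam : ℂ) ^ (n - β.card) * C.pminor β := by
    rw [Finset.sum_filter]
    refine Finset.sum_congr rfl fun β _ => ?_
    rw [hprod β]
    by_cases h : j ∈ β <;> simp [h]
  rw [hsum]
  rw [← Finset.sum_fiberwise_of_maps_to
    (g := fun β : Finset (Fin n) => β.card) (t := Finset.Icc 1 n)
    (fun β hβ => by
      simp only [Finset.mem_filter, Finset.mem_univ, true_and] at hβ
      refine Finset.mem_Icc.mpr ⟨Finset.card_pos.mpr ⟨j, hβ⟩, ?_⟩
      simpa using Finset.card_le_univ β)]
  refine Finset.sum_congr rfl fun s _ => ?_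
  rw [Finset.sum_mul]
  have hset : (Finset.univ.filter (fun β : Finset (Fin n) => j ∈ β)).filter
        (fun β => β.card = s)
      = (Finset.powersetCard s (Finset.univ : Finset (Fin n))).filter (fun α => j ∈ α) := by
    ext β
    simp only [Finset.mem_filter, Finset.mem_univ, true_and,
      Finset.mem_powersetCard_univ]
    tauto
  rw [hset]
  refine Finset.sum_congr rfl fun β hβ => ?_
  have hcard : β.card = s := by
    simp only [Finset.mem_filter, Finset.mem_powersetCard_univ] at hβ
    exact hβ.1
  rw [hcard, mul_comm]
end

section
/- Let A ∈ ℂ^{n×n} with Ind A = k and rank A^{k+1} = rank A^k = r ≤ n. Then the entries a^D_{ij} of the Drazin inverse A^D satisfy, for all i, j ∈ {1,…,n}: a^D_{ij} = ( Σ_{α ∈ I_{r,n}{j}} |((A^{k+1}_{j.}(a^{(k)}_{i.}))_α^α| ) / ( Σ_{α ∈ I_{r,n}} |((A^{k+1}))_α^α| ), and also a^D_{ij} = ( Σ_{β ∈ J_{r,n}{i}} |((A^{k+1}_{.i}(a^{(k)}_{.j}))_β^β| ) / ( Σ_{β ∈ J_{r,n}} |((A^{k+1}))_β^β| ). -/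
open Matrix

open Polynomial Finset Module

set_option linter.unusedSectionVars false
set_option linter.unusedVariables false
set_option maxHeartbeats 1600000

section Aux

variable {R : Type*} [CommRing R] {ι : Type*} [Fintype ι] [DecidableEq ι]

noncomputable def Matrix.pmin (M : Matrix ι ι R) (β : Finset ι) : R :=
  (M.submatrix (fun i : {x // x ∈ β} => i.1) (fun i : {x // x ∈ β} => i.1)).det

lemma Matrix.pminor_eq_pmin (M : Matrix ι ι ℂ) (β : Finset ι) :
    M.pminor β = M.pmin β := rfl

lemma Matrix.pmin_transpose (M : Matrix ι ι R) (β : Finset ι) :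
    Mᵀ.pmin β = M.pmin β := by
  rw [Matrix.pmin, Matrix.pmin, ← Matrix.transpose_submatrix, Matrix.det_transpose]

lemma Matrix.det_piecewise_one (S : Finset ι) (M : Matrix ι ι R) :
    (Matrix.of (S.piecewise (1 : Matrix ι ι R) M)).det = M.pmin Sᶜ := by
  classical
  let e : {x // x ∈ S} ⊕ {x // ¬ x ∈ S} ≃ ι := Equiv.sumCompl (· ∈ S)
  rw [← Matrix.det_submatrix_equiv_self e]
  have hb : (Matrix.of (S.piecewise (1 : Matrix ι ι R) M)).submatrix e e =
      Matrix.fromBlocks 1 0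
        (Matrix.of fun (a : {x // ¬ x ∈ S}) (b : {x // x ∈ S}) => M a.1 b.1)
        (Matrix.of fun (a : {x // ¬ x ∈ S}) (b : {x // ¬ x ∈ S}) => M a.1 b.1) := by
    ext a b
    cases a with
    | inl a =>
      cases b with
      | inl b =>
        simp [e, Finset.piecewise, a.2, Finset.piecewise_eq_of_mem _ _ _ a.2, Matrix.one_apply]
      | inr b =>
        have : a.1 ≠ b.1 := fun h => b.2 (h ▸ a.2)
        simp [e, Finset.piecewise, a.2, Finset.piecewise_eq_of_mem _ _ _ a.2, Matrix.one_apply, this]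
    | inr a =>
      cases b with
      | inl b => simp [e, Finset.piecewise, a.2, Finset.piecewise_eq_of_notMem _ _ _ a.2]
      | inr b => simp [e, Finset.piecewise, a.2, Finset.piecewise_eq_of_notMem _ _ _ a.2]
  rw [hb, Matrix.det_fromBlocks_zero₁₂, Matrix.det_one, one_mul, Matrix.pmin]
  let e' : {x // x ∈ Sᶜ} ≃ {x // ¬ x ∈ S} := Equiv.subtypeEquivRight (by simp)
  rw [← Matrix.det_submatrix_equiv_self e']
  rfl

lemma Matrix.det_smul_add_expand (x : R) (Q N : Matrix ι ι R) :
    (x • Q + N).det = ∑ S : Finset ι, x ^ S.card * (Matrix.of (S.piecewise Q N)).det := by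
  classical
  have h := (Matrix.detRowAlternating :
      (ι → R) [⋀^ι]→ₗ[R] R).toMultilinearMap.map_add_univ (fun i => x • Q i) (fun i => N i)
  have h0 : (x • Q + N).det = (Matrix.detRowAlternating :
      (ι → R) [⋀^ι]→ₗ[R] R).toMultilinearMap ((fun i => x • Q i) + fun i => N i) := rfl
  rw [h0, h]
  refine Finset.sum_congr rfl fun S _ => ?_
  have hs : S.piecewise (fun i => x • Q i) (fun i => N i) =
      S.piecewise (fun i => x • (S.piecewise Q N) i) (S.piecewise Q N) := by
    funext i
    by_cases hi : i ∈ S <;>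
      simp [Finset.piecewise, Finset.piecewise_eq_of_mem _ _ _, Finset.piecewise_eq_of_notMem _ _ _, hi]
  rw [hs, (Matrix.detRowAlternating :
      (ι → R) [⋀^ι]→ₗ[R] R).toMultilinearMap.map_piecewise_smul (fun _ => x) _ S]
  simp [Finset.prod_const, smul_eq_mul]
  rfl

lemma Matrix.pmin_map {S : Type*} [CommRing S] (f : R →+* S) (M : Matrix ι ι R) (β : Finset ι) :
    (M.map f).pmin β = f (M.pmin β) := by
  rw [Matrix.pmin, Matrix.pmin, Matrix.submatrix_map]
  exact (RingHom.map_det f _).symm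

noncomputable def Matrix.xone (B : Matrix ι ι R) : Matrix ι ι R[X] :=
  (X : R[X]) • (1 : Matrix ι ι R[X]) + B.map C

noncomputable def Matrix.adjC (B : Matrix ι ι R) (d : ℕ) : Matrix ι ι R :=
  Matrix.of fun a b => ((Matrix.adjugate B.xone) a b).coeff d

lemma Matrix.coeff_det_xone (B : Matrix ι ι R) (d : ℕ) (hd : d ≤ Fintype.card ι) :
    (B.xone.det).coeff d =
      ∑ α ∈ Finset.powersetCard (Fintype.card ι - d) Finset.univ, B.pmin α := by
  classical
  rw [Matrix.xone, Matrix.det_smul_add_expand, finset_sum_coeff]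
  have hterm : ∀ S : Finset ι,
      ((X : R[X]) ^ S.card * (Matrix.of (S.piecewise (1 : Matrix ι ι R[X]) (B.map C))).det).coeff d
        = if S.card = d then B.pmin Sᶜ else 0 := by
    intro S
    rw [Matrix.det_piecewise_one, Matrix.pmin_map, mul_comm, coeff_mul_X_pow']
    by_cases h : S.card = d
    · simp [h, coeff_C]
    · by_cases h2 : S.card ≤ d
      · have : d - S.card ≠ 0 := by omega
        simp [h, h2, coeff_C, this]
      · simp [h, h2]
  rw [Finset.sum_congr rfl fun S _ => hterm S, ← Finset.sum_filter]
  have hpc : Finset.filter (fun S : Finset ι => S.card = d) Finset.univ =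
      Finset.powersetCard d (Finset.univ : Finset ι) := by
    rw [Finset.powersetCard_eq_filter, Finset.powerset_univ]
  rw [hpc]
  refine Finset.sum_nbij' (fun S => Sᶜ) (fun α => αᶜ) ?_ ?_ ?_ ?_ ?_
  · intro S hS
    rw [Finset.mem_powersetCard_univ] at hS ⊢
    rw [Finset.card_compl, hS]
  · intro α hα
    rw [Finset.mem_powersetCard_univ] at hα ⊢
    rw [Finset.card_compl, hα]
    omega
  · intro S _; exact compl_compl S
  · intro α _; exact compl_compl α
  · intro S _; rfl

lemma Matrix.coeff_det_xone_updateRow (B : Matrix ι ι R) (j : ι) (v : ι → R)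
    (d : ℕ) (hd : d ≤ Fintype.card ι) :
    (((B.xone).updateRow j (fun l => C (v l))).det).coeff d =
      ∑ α ∈ (Finset.powersetCard (Fintype.card ι - d) Finset.univ).filter (fun α => j ∈ α),
        (B.updateRow j v).pmin α := by
  classical
  have hM : (B.xone).updateRow j (fun l => C (v l)) =
      (X : R[X]) • ((1 : Matrix ι ι R[X]).updateRow j 0) + (B.updateRow j v).map C := by
    ext a b
    by_cases ha : a = j
    · subst ha; simp [Matrix.xone]
    · simp [Matrix.xone, Matrix.updateRow_ne ha]
  rw [hM, Matrix.det_smul_add_expand, finset_sum_coeff]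
  have hterm : ∀ S : Finset ι,
      ((X : R[X]) ^ S.card *
        (Matrix.of (S.piecewise ((1 : Matrix ι ι R[X]).updateRow j 0)
          ((B.updateRow j v).map C))).det).coeff d
        = if S.card = d ∧ j ∉ S then (B.updateRow j v).pmin Sᶜ else 0 := by
    intro S
    by_cases hj : j ∈ S
    · have hz : (Matrix.of (S.piecewise ((1 : Matrix ι ι R[X]).updateRow j 0)
          ((B.updateRow j v).map C))).det = 0 := by
        apply Matrix.det_eq_zero_of_row_eq_zero j
        intro l
        simp [Finset.piecewise, hj, Finset.piecewise_eq_of_mem _ _ _ hj]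
      simp [hz, hj]
    · have he : (Matrix.of (S.piecewise ((1 : Matrix ι ι R[X]).updateRow j 0)
          ((B.updateRow j v).map C))) =
          (Matrix.of (S.piecewise (1 : Matrix ι ι R[X]) ((B.updateRow j v).map C))) := by
        ext a b
        by_cases ha : a ∈ S
        · have : a ≠ j := fun h => hj (h ▸ ha)
          simp [Finset.piecewise, ha, Finset.piecewise_eq_of_mem _ _ _ ha, Matrix.updateRow_ne this]
        · simp [Finset.piecewise, ha, Finset.piecewise_eq_of_notMem _ _ _ ha]
      rw [he, Matrix.det_piecewise_one, Matrix.pmin_map, mul_comm, coeff_mul_X_pow']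
      by_cases h : S.card = d
      · simp [h, hj, coeff_C]
      · by_cases h2 : S.card ≤ d
        · have : d - S.card ≠ 0 := by omega
          simp [h, h2, coeff_C, this]
        · simp [h, h2]
  rw [Finset.sum_congr rfl fun S _ => hterm S, ← Finset.sum_filter]
  refine Finset.sum_nbij' (fun S => Sᶜ) (fun α => αᶜ) ?_ ?_ ?_ ?_ ?_
  · intro S hS
    simp only [Finset.mem_filter, Finset.mem_univ, true_and] at hS
    simp only [Finset.mem_filter, Finset.mem_powersetCard_univ]
    exact ⟨by rw [Finset.card_compl, hS.1], by simp [hS.2]⟩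
  · intro α hα
    simp only [Finset.mem_filter, Finset.mem_powersetCard_univ] at hα
    simp only [Finset.mem_filter, Finset.mem_univ, true_and]
    constructor
    · rw [Finset.card_compl, hα.1]; omega
    · simp [hα.2]
  · intro S _; exact compl_compl S
  · intro α _; exact compl_compl α
  · intro S _; rfl

lemma Matrix.det_updateRow_eq_sum_adjugate (M : Matrix ι ι R) (j : ι) (w : ι → R) :
    (M.updateRow j w).det = ∑ l, w l * M.adjugate l j := by
  classical
  have h0 : (M.updateRow j w).det = Mᵀ.cramer w j := by
    rw [Matrix.cramer_apply, Matrix.updateCol_transpose, Matrix.det_transpose]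
  have hw : w = ∑ l, w l • (Pi.single l 1 : ι → R) := by
    funext m
    simp [Pi.single_apply, Finset.sum_ite_eq, eq_comm]
  rw [h0]
  conv_lhs => rw [hw]
  rw [map_sum]
  simp only [Finset.sum_apply]
  refine Finset.sum_congr rfl fun l _ => ?_
  rw [LinearMap.map_smul, Pi.smul_apply, smul_eq_mul, Matrix.adjugate_apply,
    ← Matrix.det_transpose, ← Matrix.updateCol_transpose, ← Matrix.cramer_apply]

lemma Matrix.adjC_rec (B : Matrix ι ι R) (d : ℕ) :
    B.adjC d = (B.xone.det.coeff (d+1)) • (1 : Matrix ι ι R) - B * B.adjC (d+1) := by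
  classical
  have hmul : (X : R[X]) • (Matrix.adjugate B.xone) + (B.map C) * Matrix.adjugate B.xone =
      B.xone.det • (1 : Matrix ι ι R[X]) := by
    rw [← Matrix.mul_adjugate, Matrix.xone, add_mul, smul_mul_assoc, one_mul]
  ext a b
  have h1 := congrFun (congrFun hmul a) b
  have h2 := congrArg (fun q => q.coeff (d+1)) h1
  simp only [Matrix.add_apply, Matrix.smul_apply, Matrix.mul_apply, smul_eq_mul,
    coeff_add, coeff_X_mul, finset_sum_coeff, coeff_C_mul, Matrix.map_apply] at h2
  have h3 : ((B.xone.det * (1 : Matrix ι ι R[X]) a b).coeff (d+1)) =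
      B.xone.det.coeff (d+1) * (1 : Matrix ι ι R) a b := by
    by_cases hab : a = b <;> simp [Matrix.one_apply, hab]
  rw [h3] at h2
  simp only [Matrix.sub_apply, Matrix.smul_apply, Matrix.mul_apply, smul_eq_mul, Matrix.adjC,
    Matrix.of_apply]
  linear_combination h2

lemma Matrix.pmin_empty (M : Matrix ι ι R) : M.pmin ∅ = 1 := by
  haveI : IsEmpty {x : ι // x ∈ (∅ : Finset ι)} :=
    ⟨fun x => (Finset.notMem_empty x.1) x.2⟩
  exact Matrix.det_isEmpty

lemma Matrix.coeff_det_xone_card (B : Matrix ι ι R) :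
    B.xone.det.coeff (Fintype.card ι) = 1 := by
  rw [Matrix.coeff_det_xone B _ le_rfl, Nat.sub_self, Finset.powersetCard_zero,
    Finset.sum_singleton, Matrix.pmin_empty]

lemma Matrix.adjC_card (B : Matrix ι ι R) : B.adjC (Fintype.card ι) = 0 := by
  ext a b
  have hs : (Pi.single a (1 : R[X])) = fun l => C ((Pi.single a 1 : ι → R) l) := by
    funext l
    by_cases h : l = a <;> simp [Pi.single_apply, h]
  rw [Matrix.adjC, Matrix.of_apply, Matrix.adjugate_apply, hs,
    Matrix.coeff_det_xone_updateRow B b _ _ le_rfl]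
  rw [Nat.sub_self, Finset.powersetCard_zero, Finset.filter_singleton]
  simp

lemma Matrix.adjC_closed [Nonempty ι] (B : Matrix ι ι R) :
    ∀ t : ℕ, t ≤ Fintype.card ι - 1 →
    B.adjC (Fintype.card ι - 1 - t) =
      ∑ u ∈ Finset.range (t+1),
        ((-1:R)^u * B.xone.det.coeff (Fintype.card ι - (t - u))) • B ^ u := by
  have hcard : 1 ≤ Fintype.card ι := Fintype.card_pos
  intro t
  induction t with
  | zero =>
    intro _
    rw [Matrix.adjC_rec]
    have h1 : Fintype.card ι - 1 - 0 + 1 = Fintype.card ι := by omega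
    rw [h1, Matrix.adjC_card, Matrix.coeff_det_xone_card, Finset.sum_range_one]
    have h2 : Fintype.card ι - (0 - 0) = Fintype.card ι := by omega
    rw [h2, Matrix.coeff_det_xone_card]
    simp
  | succ t ih =>
    intro ht
    have ht' : t ≤ Fintype.card ι - 1 := by omega
    rw [Matrix.adjC_rec]
    have h1 : Fintype.card ι - 1 - (t+1) + 1 = Fintype.card ι - 1 - t := by omega
    rw [h1, ih ht']
    have key : ∑ u ∈ Finset.range (t+1+1),
        ((-1:R)^u * B.xone.det.coeff (Fintype.card ι - (t + 1 - u))) • B ^ u =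
        ((-1:R)^0 * B.xone.det.coeff (Fintype.card ι - (t + 1 - 0))) • B ^ 0 +
        ∑ u ∈ Finset.range (t+1),
          ((-1:R)^(u+1) * B.xone.det.coeff (Fintype.card ι - (t + 1 - (u+1)))) • B ^ (u+1) := by
      rw [Finset.sum_range_succ' (fun u =>
        ((-1:R)^u * B.xone.det.coeff (Fintype.card ι - (t + 1 - u))) • B ^ u) (t+1)]
      exact add_comm _ _
    rw [key, Finset.mul_sum]
    have h4 : ∀ u ∈ Finset.range (t+1),
        B * (((-1:R)^u * B.xone.det.coeff (Fintype.card ι - (t - u))) • B ^ u) =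
        ((-1:R)^u * B.xone.det.coeff (Fintype.card ι - (t - u))) • B ^ (u+1) := by
      intro u _
      rw [mul_smul_comm, ← pow_succ']
    rw [Finset.sum_congr rfl h4]
    have h5 : ∀ u ∈ Finset.range (t+1),
        ((-1:R)^(u+1) * B.xone.det.coeff (Fintype.card ι - (t + 1 - (u+1)))) • B ^ (u+1) =
        -(((-1:R)^u * B.xone.det.coeff (Fintype.card ι - (t - u))) • B ^ (u+1)) := by
      intro u _
      have he : t + 1 - (u + 1) = t - u := by omega
      rw [he, ← neg_smul]
      congr 1
      ring
    rw [Finset.sum_congr rfl h5, Finset.sum_neg_distrib, ← sub_eq_add_neg]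
    have h6 : Fintype.card ι - (t + 1 - 0) = Fintype.card ι - 1 - t := by omega
    simp [h6, show Fintype.card ι - (t+1) = Fintype.card ι - 1 - t by omega]

lemma Matrix.xone_transpose (B : Matrix ι ι R) : (Bᵀ).xone = (B.xone)ᵀ := by
  rw [Matrix.xone, Matrix.xone, Matrix.transpose_add, Matrix.transpose_smul,
    Matrix.transpose_one, Matrix.transpose_map]

lemma Matrix.adjC_transpose (B : Matrix ι ι R) (d : ℕ) : (Bᵀ).adjC d = (B.adjC d)ᵀ := by
  ext a b
  rw [Matrix.adjC, Matrix.of_apply, Matrix.xone_transpose, ← Matrix.adjugate_transpose]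
  rfl

lemma Matrix.xone_det_eq_charpoly_neg (B : Matrix ι ι R) : B.xone.det = (-B).charpoly := by
  rw [Matrix.charpoly]
  congr 1
  ext a b
  by_cases hab : a = b
  · subst hab
    rw [Matrix.charmatrix_apply_eq]
    simp [Matrix.xone, Matrix.one_apply, sub_eq_add_neg]
  · rw [Matrix.charmatrix_apply_ne _ _ _ hab]
    simp [Matrix.xone, Matrix.one_apply, hab]

end Aux

section RankAux

variable {ι : Type*} [Fintype ι] [DecidableEq ι]

lemma Matrix.rank_submatrix_val_le (B : Matrix ι ι ℂ) (α : Finset ι) :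
    (B.submatrix (fun i : {x // x ∈ α} => i.1) (fun i : {x // x ∈ α} => i.1)).rank ≤ B.rank := by
  have h1 : ((1 : Matrix ι ι ℂ).submatrix (fun i : {x // x ∈ α} => i.1) (Equiv.refl ι)) * B =
      B.submatrix (fun i : {x // x ∈ α} => i.1) id := by
    rw [Matrix.one_submatrix_mul]
    rfl
  have h2 : (B.submatrix (fun i : {x // x ∈ α} => i.1) id) *
      ((1 : Matrix ι ι ℂ).submatrix (Equiv.refl ι) (fun i : {x // x ∈ α} => i.1)) =
      B.submatrix (fun i : {x // x ∈ α} => i.1) (fun i : {x // x ∈ α} => i.1) := by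
    rw [Matrix.mul_submatrix_one]
    rfl
  calc (B.submatrix (fun i : {x // x ∈ α} => i.1) (fun i : {x // x ∈ α} => i.1)).rank
      ≤ (B.submatrix (fun i : {x // x ∈ α} => i.1) id).rank := by
        rw [← h2]; exact Matrix.rank_mul_le_left _ _
    _ ≤ B.rank := by rw [← h1]; exact Matrix.rank_mul_le_right _ _

lemma Matrix.pmin_eq_zero_of_rank_lt {B : Matrix ι ι ℂ} {α : Finset ι}
    (h : B.rank < α.card) : B.pmin α = 0 := by
  by_contra hne
  have hu : IsUnit (B.submatrix (fun i : {x // x ∈ α} => i.1) (fun i : {x // x ∈ α} => i.1)) :=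
    (Matrix.isUnit_iff_isUnit_det _).mpr (isUnit_iff_ne_zero.mpr hne)
  have h1 := Matrix.rank_of_isUnit _ hu
  rw [Fintype.card_coe] at h1
  have h2 := Matrix.rank_submatrix_val_le B α
  omega

lemma Matrix.charpoly_zero_matrix (κ : Type*) [Fintype κ] [DecidableEq κ] :
    (0 : Matrix κ κ ℂ).charpoly = X ^ (Fintype.card κ) := by
  rw [Matrix.charpoly, Matrix.charmatrix, map_zero, sub_zero,
    show Matrix.scalar κ (X : ℂ[X]) = Matrix.diagonal (fun _ => (X : ℂ[X])) from rfl,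
    Matrix.det_diagonal]
  simp [Finset.prod_const, Finset.card_univ]

lemma Module.End.charpoly_zero (K : Type*) [AddCommGroup K] [Module ℂ K]
    [FiniteDimensional ℂ K] :
    (0 : K →ₗ[ℂ] K).charpoly = X ^ (finrank ℂ K) := by
  let b := Module.finBasis ℂ K
  rw [← LinearMap.charpoly_toMatrix (0 : K →ₗ[ℂ] K) b]
  rw [map_zero, Matrix.charpoly_zero_matrix]
  simp

lemma Matrix.charpoly_coeff_ne_zero_of_idem (M E : Matrix ι ι ℂ) (r : ℕ)
    (hE : E * E = E) (hME : M * E = M) (hEM : E * M = M)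
    (hrM : M.rank = r) (hrE : E.rank = r) :
    (Matrix.charpoly M).coeff (Fintype.card ι - r) ≠ 0 := by
  classical
  set f := M.mulVecLin with hf
  set e := E.mulVecLin with he
  have he2 : e ∘ₗ e = e := by rw [he, ← Matrix.mulVecLin_mul, hE]
  have hfe : f ∘ₗ e = f := by rw [hf, he, ← Matrix.mulVecLin_mul, hME]
  have hef : e ∘ₗ f = f := by rw [hf, he, ← Matrix.mulVecLin_mul, hEM]
  set V := LinearMap.range e with hV
  have hproj : ∀ x : V, (e.codRestrict V (fun y => LinearMap.mem_range_self e y)) x.1 = x := by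
    rintro ⟨x, hx⟩
    obtain ⟨z, rfl⟩ := hx
    apply Subtype.ext
    exact congrFun (congrArg (fun (g : (ι → ℂ) →ₗ[ℂ] ι → ℂ) => ⇑g) he2) z
  have hcompl : IsCompl V (LinearMap.ker e) := by
    have := LinearMap.isCompl_of_proj hproj
    rwa [LinearMap.ker_codRestrict] at this
  have hle : LinearMap.range f ≤ V := by
    rintro y ⟨x, rfl⟩
    exact ⟨f x, congrFun (congrArg (fun (g : (ι → ℂ) →ₗ[ℂ] ι → ℂ) => ⇑g) hef) x⟩
  have hdim : finrank ℂ (LinearMap.range f) = finrank ℂ V := by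
    have h1 : finrank ℂ (LinearMap.range f) = r := hrM
    have h2 : finrank ℂ V = r := hrE
    rw [h1, h2]
  have hrange : LinearMap.range f = V := Submodule.eq_of_le_of_finrank_eq hle hdim
  have hfV : ∀ x ∈ V, f x ∈ V := fun x _ => hrange ▸ LinearMap.mem_range_self f x
  set g := f.restrict hfV with hg
  have hgsurj : Function.Surjective g := by
    rintro ⟨y, hy⟩
    rw [← hrange] at hy
    obtain ⟨z, rfl⟩ := hy
    refine ⟨⟨e z, LinearMap.mem_range_self e z⟩, ?_⟩
    apply Subtype.ext
    show f (e z) = f z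
    exact congrFun (congrArg (fun (g : (ι → ℂ) →ₗ[ℂ] ι → ℂ) => ⇑g) hfe) z
  have hginj : Function.Injective g :=
    ((LinearMap.injective_iff_surjective (f := g)).mpr hgsurj)
  let φ := Submodule.prodEquivOfIsCompl V (LinearMap.ker e) hcompl
  have hconj : f = (φ.conj (LinearMap.prodMap g (0 : LinearMap.ker e →ₗ[ℂ] LinearMap.ker e))
      : (ι → ℂ) →ₗ[ℂ] ι → ℂ) := by
    apply LinearMap.ext
    intro x
    rw [LinearEquiv.conj_apply]
    simp only [LinearMap.coe_comp, Function.comp_apply, LinearEquiv.coe_coe]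
    conv_lhs => rw [← φ.apply_symm_apply x]
    generalize φ.symm x = pr
    obtain ⟨v, k⟩ := pr
    show f (φ (v, k)) = φ (LinearMap.prodMap g 0 (v, k))
    rw [Submodule.coe_prodEquivOfIsCompl']
    have hk : f k.1 = 0 := by
      have hk0 : e k.1 = 0 := k.2
      have h1 : f (e k.1) = f k.1 :=
        congrFun (congrArg (fun (g : (ι → ℂ) →ₗ[ℂ] ι → ℂ) => ⇑g) hfe) k.1
      rw [hk0, map_zero] at h1
      exact h1.symm
    rw [map_add, hk, add_zero]
    show (f v.1 : ι → ℂ) = φ (g v, (0 : LinearMap.ker e →ₗ[ℂ] LinearMap.ker e) k)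
    rw [LinearMap.zero_apply, show φ (g v, (0 : LinearMap.ker e)) = (g v).1 +
      ((0 : LinearMap.ker e) : ι → ℂ) from Submodule.coe_prodEquivOfIsCompl' _ _ _ _]
    simp [hg, LinearMap.restrict_apply]
  have hcp : Matrix.charpoly M = f.charpoly := by
    rw [← LinearMap.charpoly_toMatrix f (Pi.basisFun ℂ ι)]
    congr 1
    rw [LinearMap.toMatrix_eq_toMatrix', hf, ← Matrix.toLin'_apply', LinearMap.toMatrix'_toLin']
  have hsplit : f.charpoly = g.charpoly * X ^ (finrank ℂ (LinearMap.ker e)) := by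
    rw [hconj, LinearEquiv.charpoly_conj, LinearMap.charpoly_prodMap,
      Module.End.charpoly_zero]
  have hker : finrank ℂ (LinearMap.ker e) = Fintype.card ι - r := by
    have h1 := LinearMap.finrank_range_add_finrank_ker e
    have h2 : finrank ℂ (LinearMap.range e) = r := hrE
    have h3 : finrank ℂ (ι → ℂ) = Fintype.card ι := by
      simp [Module.finrank_pi]
    omega
  rw [hcp, hsplit, hker, Polynomial.coeff_mul_X_pow', if_pos le_rfl, Nat.sub_self]
  have hdet : LinearMap.det g ≠ 0 := by
    have hu := LinearEquiv.isUnit_det' (LinearEquiv.ofBijective g ⟨hginj, hgsurj⟩)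
    exact hu.ne_zero
  intro hzero
  rw [LinearMap.det_eq_sign_charpoly_coeff, hzero, mul_zero] at hdet
  exact hdet rfl

end RankAux

/-- Determinantal representations of the Drazin inverse `X = A^D`
(characterized by `A^{k+1} X = A^k`, `XAX = X`, `AX = XA`) of `A ∈ ℂ^{n×n}`, where
`k = Ind A` and `rank A^{k+1} = rank A^k = r ≤ n`. -/
theorem drazinInverse_entry_det_repr
    (n k r : ℕ) (A : Matrix (Fin n) (Fin n) ℂ)
    (hk : IsLeast {j : ℕ | (A ^ (j + 1)).rank = (A ^ j).rank} k)
    (hr1 : (A ^ (k + 1)).rank = r) (hr2 : (A ^ k).rank = r) (hrn : r ≤ n)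
    (X : Matrix (Fin n) (Fin n) ℂ)
    (h1 : A ^ (k + 1) * X = A ^ k) (h2 : X * A * X = X) (h3 : A * X = X * A)
    (i j : Fin n) :
    X i j =
      (∑ α ∈ (Finset.powersetCard r (Finset.univ : Finset (Fin n))).filter
          (fun α => j ∈ α),
        ((A ^ (k + 1)).updateRow j (fun l => (A ^ k) i l)).pminor α) /
      (∑ α ∈ Finset.powersetCard r (Finset.univ : Finset (Fin n)),
        (A ^ (k + 1)).pminor α) ∧
    X i j =
      (∑ β ∈ (Finset.powersetCard r (Finset.univ : Finset (Fin n))).filter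
          (fun β => i ∈ β),
        ((A ^ (k + 1)).updateCol i (fun l => (A ^ k) l j)).pminor β) /
      (∑ β ∈ Finset.powersetCard r (Finset.univ : Finset (Fin n)),
        (A ^ (k + 1)).pminor β) := by
  classical
  haveI : Nonempty (Fin n) := ⟨i⟩
  have hcard : Fintype.card (Fin n) = n := Fintype.card_fin n
  -- X = X^(m+1) * A^m for all m
  have hXX : X * (X * A) = X := by
    rw [← h3, ← mul_assoc]; exact h2
  have hX2A : X ^ 2 * A = X := by
    rw [pow_two, mul_assoc]; exact hXX
  have hXpow : ∀ m : ℕ, X = X ^ (m+1) * A ^ m := by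
    intro m
    induction m with
    | zero => simp
    | succ m ih =>
      have hassoc : X ^ (m+2) * A ^ (m+1) = X ^ m * (X ^ 2 * A) * A ^ m := by
        rw [pow_add X m 2, pow_succ' A m, mul_assoc (X ^ m) (X ^ 2) _,
          ← mul_assoc (X ^ 2) A (A ^ m), ← mul_assoc]
      rw [hassoc, hX2A, ← pow_succ]
      exact ih
  by_cases hr0 : r = 0
  · -- degenerate case : X = 0 and all sums are 0
    subst hr0
    have hAk0 : A ^ k = 0 := by
      have hb : LinearMap.range (A ^ k).mulVecLin = ⊥ := by
        have := hr2
        rw [Matrix.rank] at this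
        exact Submodule.finrank_eq_zero.mp this
      ext a b
      have hmem : (A ^ k).mulVecLin (Pi.single b 1) ∈ LinearMap.range (A ^ k).mulVecLin :=
        LinearMap.mem_range_self _ _
      rw [hb, Submodule.mem_bot] at hmem
      have := congrFun hmem a
      rw [Matrix.mulVecLin_apply, Matrix.mulVec_single] at this
      simpa using this
    have hX0 : X = 0 := by
      rw [hXpow k, hAk0, mul_zero]
    constructor <;>
    · rw [hX0]
      rw [Finset.powersetCard_zero, Finset.filter_singleton]
      simp
  · -- main case
    obtain ⟨t, rfl⟩ : ∃ t, r = t + 1 := ⟨r - 1, by omega⟩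
    have htn : t + 1 ≤ n := hrn
    set B := A ^ (k+1) with hB
    have hrB : B.rank = t + 1 := hr1
    have hcBX : Commute B X := (show Commute A X from h3).pow_left (k+1)
    set p := B.xone.det with hp
    set W := B.adjC (n - (t+1)) with hW
    have hWform : W = ∑ u ∈ Finset.range (t+1),
        ((-1:ℂ)^u * p.coeff (n - (t - u))) • B ^ u := by
      have hcl := Matrix.adjC_closed B t (by rw [hcard]; omega)
      rw [hcard, show n - 1 - t = n - (t+1) from by omega] at hcl
      exact hcl
    -- Cayley–Hamilton consequences
    have hdeg : p.natDegree < n + 1 := by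
      rw [hp, Matrix.xone_det_eq_charpoly_neg, Matrix.charpoly_natDegree_eq_dim, hcard]
      omega
    have hCH0 : ∑ x ∈ Finset.range (n+1), p.coeff x • (-B) ^ x = 0 := by
      have h := Matrix.aeval_self_charpoly (-B)
      rw [← Matrix.xone_det_eq_charpoly_neg, ← hp, aeval_eq_sum_range' hdeg] at h
      exact h
    have hCH1 : ∑ x ∈ Finset.range (n+1), ((-1:ℂ)^x * p.coeff x) • B ^ x = 0 := by
      rw [← hCH0]
      refine Finset.sum_congr rfl fun x _ => ?_
      rw [show (-B) = (-1:ℂ) • B from by simp, _root_.smul_pow, smul_smul, mul_comm]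
    have hlow : ∀ x, x < n - (t+1) → p.coeff x = 0 := by
      intro x hx
      rw [hp, Matrix.coeff_det_xone B x (by rw [hcard]; omega)]
      refine Finset.sum_eq_zero fun α hα => ?_
      rw [Finset.mem_powersetCard_univ] at hα
      apply Matrix.pmin_eq_zero_of_rank_lt
      rw [hrB, hα, hcard]
      omega
    have hCH2 : ∑ x ∈ Finset.Ico (n - (t+1)) (n+1), ((-1:ℂ)^x * p.coeff x) • B ^ x = 0 := by
      rw [← hCH1]
      apply Finset.sum_subset
      · intro x hx
        rw [Finset.mem_Ico] at hx
        rw [Finset.mem_range]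
        omega
      · intro x hx hnx
        rw [Finset.mem_range] at hx
        rw [Finset.mem_Ico] at hnx
        rw [hlow x (by omega), mul_zero, zero_smul]
    have hCH3 : ∑ s ∈ Finset.range (t+2), ((-1:ℂ)^(n-s) * p.coeff (n-s)) • B ^ (n-s) = 0 := by
      rw [← hCH2]
      refine Finset.sum_nbij' (fun s => n - s) (fun x => n - x) ?_ ?_ ?_ ?_ ?_
      · intro s hs
        rw [Finset.mem_range] at hs
        rw [Finset.mem_Ico]
        omega
      · intro x hx
        rw [Finset.mem_Ico] at hx
        rw [Finset.mem_range]
        omega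
      · intro s hs
        rw [Finset.mem_range] at hs
        omega
      · intro x hx
        rw [Finset.mem_Ico] at hx
        omega
      · intro s _
        rfl
    have hsign : ∀ s, s ≤ n → (-1:ℂ)^n * (-1)^(n-s) = (-1)^s := by
      intro s hs
      have hh1 : (-1:ℂ)^(n-s) * (-1)^s = (-1)^n := by
        rw [← pow_add]
        congr 1
        omega
      have hh2 : ((-1:ℂ)^(n-s))^2 = 1 := by
        rw [← pow_mul, mul_comm, pow_mul]
        norm_num
      linear_combination ((-1:ℂ)^s) * hh2 - ((-1:ℂ)^(n-s)) * hh1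
    have hCH : ∑ s ∈ Finset.range (t+2), ((-1:ℂ)^s * p.coeff (n-s)) • B ^ (n-s) = 0 := by
      have hc := congrArg (fun (M : Matrix (Fin n) (Fin n) ℂ) => ((-1:ℂ)^n) • M) hCH3
      simp only [smul_zero, Finset.smul_sum] at hc
      rw [← hc]
      refine Finset.sum_congr rfl fun s hs => ?_
      rw [Finset.mem_range] at hs
      rw [smul_smul, ← mul_assoc, hsign s (by omega)]
    -- Q * X = 0
    set m := (k+1) * (n - (t+1)) with hm
    have hAm : A ^ m = B ^ (n - (t+1)) := by rw [hB, ← pow_mul]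
    have hXB : X = X ^ (m+1) * B ^ (n - (t+1)) := by rw [← hAm]; exact hXpow m
    have hQX : ∑ s ∈ Finset.range (t+2),
        ((-1:ℂ)^s * p.coeff (n-s)) • (B ^ (t+1-s) * X) = 0 := by
      have hterm : ∀ s ∈ Finset.range (t+2), B ^ (t+1-s) * X = X ^ (m+1) * B ^ (n-s) := by
        intro s hs
        rw [Finset.mem_range] at hs
        calc B ^ (t+1-s) * X = B ^ (t+1-s) * (X ^ (m+1) * B ^ (n - (t+1))) := by
              conv_lhs => rw [hXB]
          _ = (B ^ (t+1-s) * X ^ (m+1)) * B ^ (n - (t+1)) := by rw [mul_assoc]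
          _ = (X ^ (m+1) * B ^ (t+1-s)) * B ^ (n - (t+1)) := by
              rw [(hcBX.pow_pow (t+1-s) (m+1)).eq]
          _ = X ^ (m+1) * B ^ (n-s) := by
              rw [mul_assoc, ← pow_add]
              congr 2
              omega
      calc ∑ s ∈ Finset.range (t+2), ((-1:ℂ)^s * p.coeff (n-s)) • (B ^ (t+1-s) * X)
          = ∑ s ∈ Finset.range (t+2),
              X ^ (m+1) * (((-1:ℂ)^s * p.coeff (n-s)) • B ^ (n-s)) := by
            refine Finset.sum_congr rfl fun s hs => ?_
            rw [hterm s hs, mul_smul_comm]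
        _ = X ^ (m+1) * ∑ s ∈ Finset.range (t+2),
              ((-1:ℂ)^s * p.coeff (n-s)) • B ^ (n-s) := by rw [Finset.mul_sum]
        _ = 0 := by rw [hCH, mul_zero]
    -- A^k * W = e • X
    have hBu : ∀ u : ℕ, A ^ k * B ^ u = B ^ (u+1) * X := by
      intro u
      have hcomm : A ^ k * B ^ u = B ^ u * A ^ k := by
        rw [hB, ← pow_mul, ← pow_add, ← pow_add]
        exact congrArg (A ^ ·) (by omega)
      rw [hcomm, ← h1, ← mul_assoc, ← pow_succ]
    have hsign2 : ∀ u, u ≤ t → (-1:ℂ)^(t-u) = (-1)^t * (-1)^u := by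
      intro u hu
      have hh1 : (-1:ℂ)^(t-u) * (-1)^u = (-1)^t := by
        rw [← pow_add]
        congr 1
        omega
      have hh2 : ((-1:ℂ)^u)^2 = 1 := by
        rw [← pow_mul, mul_comm, pow_mul]
        norm_num
      linear_combination (-((-1:ℂ)^(t-u))) * hh2 + ((-1:ℂ)^u) * hh1
    have hAkW : A ^ k * W = p.coeff (n - (t+1)) • X := by
      have hL : A ^ k * W = ∑ u ∈ Finset.range (t+1),
          ((-1:ℂ)^u * p.coeff (n-(t-u))) • (B ^ (u+1) * X) := by
        rw [hWform, Finset.mul_sum]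
        refine Finset.sum_congr rfl fun u _ => ?_
        rw [mul_smul_comm, hBu]
      have hsplit := hQX
      rw [Finset.sum_range_succ] at hsplit
      have hlast : ((-1:ℂ)^(t+1) * p.coeff (n-(t+1))) • (B ^ (t+1-(t+1)) * X)
          = ((-1:ℂ)^(t+1) * p.coeff (n-(t+1))) • X := by
        rw [Nat.sub_self, pow_zero, one_mul]
      rw [hlast] at hsplit
      have hrefl := Finset.sum_range_reflect
        (fun s => ((-1:ℂ)^s * p.coeff (n-s)) • (B ^ (t+1-s) * X)) (t+1)
      have hrefl2 : ∑ s ∈ Finset.range (t+1), ((-1:ℂ)^s * p.coeff (n-s)) • (B ^ (t+1-s) * X)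
          = (-1:ℂ)^t • (A ^ k * W) := by
        rw [← hrefl, hL, Finset.smul_sum]
        refine Finset.sum_congr rfl fun u hu => ?_
        rw [Finset.mem_range] at hu
        have he1 : t + 1 - 1 - u = t - u := by omega
        have he2 : t + 1 - (t - u) = u + 1 := by omega
        rw [he1, he2, hsign2 u (by omega), smul_smul]
        ring_nf
      rw [hrefl2] at hsplit
      -- hsplit : (-1)^t • (A^k * W) + ((-1)^(t+1) * e) • X = 0
      have hs2 : (-1:ℂ)^(t+1) = -(-1:ℂ)^t := by
        rw [pow_succ]
        ring
      rw [hs2] at hsplit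
      have hsq : (-1:ℂ)^t * (-1)^t = 1 := by
        rw [← pow_add, show t + t = 2 * t from by omega, pow_mul]
        norm_num
      have h6 := congrArg (fun (M : Matrix (Fin n) (Fin n) ℂ) => ((-1:ℂ)^t) • M) hsplit
      simp only [smul_add, smul_smul, smul_zero] at h6
      rw [hsq, one_smul] at h6
      have h7 : (-1:ℂ)^t * (-(-1:ℂ)^t * p.coeff (n - (t+1))) = - p.coeff (n-(t+1)) := by
        linear_combination (- p.coeff (n - (t+1))) * hsq
      rw [h7, neg_smul, add_neg_eq_zero] at h6
      exact h6
    -- denominator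
    have hden : ∑ α ∈ Finset.powersetCard (t+1) (Finset.univ : Finset (Fin n)), B.pmin α
        = p.coeff (n - (t+1)) := by
      rw [hp, Matrix.coeff_det_xone B (n - (t+1)) (by rw [hcard]; omega), hcard,
        show n - (n - (t+1)) = t + 1 from by omega]
    -- E = A * X facts
    have hEE : (A*X)*(A*X) = A*X := by
      rw [mul_assoc, ← mul_assoc X A X, h2]
    have hBA : B * A = A * B := by
      rw [hB, ← pow_succ, ← pow_succ']
    have hBE : B * (A*X) = B := by
      rw [← mul_assoc, hBA, mul_assoc, h1, hB, pow_succ']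
    have hEB : (A*X) * B = B := by
      rw [mul_assoc, ← hcBX.eq, h1, hB, pow_succ']
    have hEpow : ∀ mm : ℕ, (A*X)^(mm+1) = A*X := by
      intro mm
      induction mm with
      | zero => simp
      | succ mm ih => rw [pow_succ, ih, hEE]
    have hrE : (A*X).rank = t+1 := by
      have hle1 : (A*X).rank ≤ t+1 := by
        have h4 : (A*X)^(k+1) = A^(k+1) * X^(k+1) := (show Commute A X from h3).mul_pow (k+1)
        calc (A*X).rank = ((A*X)^(k+1)).rank := by rw [hEpow k]
          _ = (A^(k+1) * X^(k+1)).rank := by rw [h4]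
          _ ≤ (A^(k+1)).rank := Matrix.rank_mul_le_left _ _
          _ = t+1 := by rw [← hB, hrB]
      have hge1 : t+1 ≤ (A*X).rank := by
        have h5 : A^k * (A*X) = A^k := by
          rw [← mul_assoc, ← pow_succ, ← hB, h1]
        calc t+1 = (A^k).rank := hr2.symm
          _ = (A^k * (A*X)).rank := by rw [h5]
          _ ≤ (A*X).rank := Matrix.rank_mul_le_right _ _
      omega
    have hne : p.coeff (n - (t+1)) ≠ 0 := by
      have hcp : p = (-B).charpoly := Matrix.xone_det_eq_charpoly_neg B
      have hmv : (-B).mulVecLin = -(B.mulVecLin) := by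
        ext v
        simp [Matrix.mulVecLin_apply, Matrix.neg_mulVec]
      have hrnB : (-B).rank = t+1 := by
        rw [Matrix.rank, hmv, LinearMap.range_neg, ← Matrix.rank, hrB]
      have hME : (-B) * (A*X) = -B := by rw [neg_mul, hBE]
      have hEM : (A*X) * (-B) = -B := by rw [mul_neg, hEB]
      have hnz := Matrix.charpoly_coeff_ne_zero_of_idem (-B) (A*X) (t+1)
        hEE hME hEM hrnB hrE
      rw [hcard] at hnz
      rw [hcp]
      exact hnz
    -- row numerator
    have hnum : ∑ α ∈ (Finset.powersetCard (t+1) (Finset.univ : Finset (Fin n))).filter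
        (fun α => j ∈ α), (B.updateRow j (fun l => (A^k) i l)).pmin α
        = p.coeff (n-(t+1)) * X i j := by
      have hL4 := Matrix.coeff_det_xone_updateRow B j (fun l => (A^k) i l) (n-(t+1))
        (by rw [hcard]; omega)
      rw [hcard, show n - (n-(t+1)) = t+1 from by omega] at hL4
      rw [← hL4, Matrix.det_updateRow_eq_sum_adjugate, finset_sum_coeff]
      have hC : ∀ l, ((C ((A^k) i l) * (B.xone).adjugate l j).coeff (n-(t+1)))
          = (A^k) i l * B.adjC (n-(t+1)) l j := by
        intro l
        rw [coeff_C_mul]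
        rfl
      rw [Finset.sum_congr rfl fun l _ => hC l,
        show (∑ l, (A^k) i l * B.adjC (n-(t+1)) l j) = (A^k * W) i j from
          (Matrix.mul_apply).symm, hAkW]
      simp
    -- column numerator
    have hnumc : ∑ β ∈ (Finset.powersetCard (t+1) (Finset.univ : Finset (Fin n))).filter
        (fun β => i ∈ β), (B.updateCol i (fun l => (A^k) l j)).pmin β
        = p.coeff (n-(t+1)) * X i j := by
      have hT : ∀ β : Finset (Fin n), (B.updateCol i (fun l => (A^k) l j)).pmin β
          = ((Bᵀ).updateRow i (fun l => (A^k) l j)).pmin β := by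
        intro β
        rw [← Matrix.pmin_transpose ((Bᵀ).updateRow i (fun l => (A^k) l j)) β,
          Matrix.updateRow_transpose, Matrix.transpose_transpose]
      rw [Finset.sum_congr rfl fun β _ => hT β]
      have hL4 := Matrix.coeff_det_xone_updateRow (Bᵀ) i (fun l => (A^k) l j) (n-(t+1))
        (by rw [hcard]; omega)
      rw [hcard, show n - (n-(t+1)) = t+1 from by omega] at hL4
      rw [← hL4, Matrix.det_updateRow_eq_sum_adjugate, finset_sum_coeff]
      have hC : ∀ l, ((C ((A^k) l j) * ((Bᵀ).xone).adjugate l i).coeff (n-(t+1)))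
          = (A^k) l j * B.adjC (n-(t+1)) i l := by
        intro l
        rw [coeff_C_mul]
        congr 1
        rw [show (((Bᵀ).xone).adjugate l i).coeff (n-(t+1)) = (Bᵀ).adjC (n-(t+1)) l i from rfl,
          Matrix.adjC_transpose]
        rfl
      rw [Finset.sum_congr rfl fun l _ => hC l]
      have hmulc : (∑ l, (A^k) l j * W i l) = (W * A^k) i j := by
        rw [Matrix.mul_apply]
        exact Finset.sum_congr rfl fun l _ => mul_comm _ _
      rw [hmulc]
      have hcWA : W * A^k = A^k * W := by
        rw [hWform, Finset.sum_mul, Finset.mul_sum]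
        refine Finset.sum_congr rfl fun u _ => ?_
        rw [smul_mul_assoc, mul_smul_comm]
        congr 1
        rw [hB, ← pow_mul, ← pow_add, ← pow_add]
        exact congrArg (A ^ ·) (by omega)
      rw [hcWA, hAkW]
      simp
    constructor
    · simp only [Matrix.pminor_eq_pmin]
      rw [hnum, hden, mul_comm, mul_div_assoc, div_self hne, mul_one]
    · simp only [Matrix.pminor_eq_pmin]
      rw [hnumc, hden, mul_comm, mul_div_assoc, div_self hne, mul_one]
end
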